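/- arXiv:2103.11990 — 5 statements merged into one kernel-verified Lean document; each statement's English description precedes it below -/
import Mathlib

section
/- Let G be a bipartite graph with a map C : E → {c_1,...,c_k} in which a vertex v_1 has a (+c−c')-deficiency and at most one other vertex v_2 is deficient. Then the maximal alternating walk with colors c and c' starting from v_1 along one of its two c-colored edges never returns to v_1. -/
open SimpleGraph

variable {V : Type*}

/-- A proper edge `k`-coloring: distinct edges sharing a vertex receive distinct colors. -/
def IsProperEdgeColoring {k : ℕ} (G : SimpleGraph V) (C : Sym2 V → Fin k) : Prop :=
  ∀ e₁ ∈ G.edgeSet, ∀ e₂ ∈ G.edgeSet, e₁ ≠ e₂ → (∃ v, v ∈ e₁ ∧ v ∈ e₂) → C e₁ ≠ C e₂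

/-- A graph is bipartite if its vertices can be 2-colored with no monochromatic edge. -/
def IsBipartite (G : SimpleGraph V) : Prop :=
  ∃ s : V → Bool, ∀ u v, G.Adj u v → s u ≠ s v

/-- A vertex is deficient if two distinct incident edges share a color. -/
def DeficientAt {k : ℕ} (G : SimpleGraph V) (C : Sym2 V → Fin k) (v : V) : Prop :=
  ∃ e₁ ∈ G.edgeSet, ∃ e₂ ∈ G.edgeSet, e₁ ≠ e₂ ∧ v ∈ e₁ ∧ v ∈ e₂ ∧ C e₁ = C e₂

/-- `v` has a `(+c−c')`-deficiency: exactly two incident `c`-edges, no incident `c'`-edge,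
and all other incident edges pairwise differently colored. -/
def HasDeficiency {k : ℕ} (G : SimpleGraph V) (C : Sym2 V → Fin k) (v : V) (c c' : Fin k) :
    Prop :=
  Set.ncard {e ∈ G.edgeSet | v ∈ e ∧ C e = c} = 2 ∧
  (∀ e ∈ G.edgeSet, v ∈ e → C e ≠ c') ∧
  (∀ e₁ ∈ G.edgeSet, ∀ e₂ ∈ G.edgeSet, v ∈ e₁ → v ∈ e₂ → e₁ ≠ e₂ → C e₁ ≠ c → C e₁ ≠ C e₂)

/-- An almost edge `k`-coloring: at most two deficient vertices, each with a
`(+c−c')`-type deficiency for some colors. -/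
def IsAlmostEdgeColoring {k : ℕ} (G : SimpleGraph V) (C : Sym2 V → Fin k) : Prop :=
  Set.ncard {v | DeficientAt G C v} ≤ 2 ∧
  ∀ v, DeficientAt G C v → ∃ c c', HasDeficiency G C v c c'

/-- An alternating walk with colors `c` and `c'`: every edge is colored `c` or `c'`,
and consecutive edges have different colors. -/
def IsAltWalk {k : ℕ} (G : SimpleGraph V) (C : Sym2 V → Fin k) (c c' : Fin k)
    {u v : V} (w : G.Walk u v) : Prop :=
  (∀ e ∈ w.edges, C e = c ∨ C e = c') ∧ List.Chain' (fun e f => C e ≠ C f) w.edges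

/-- The walk can be extended at its final vertex by a fresh edge of color `c` or `c'`
continuing the alternation. -/
def ExtendableAtEnd {k : ℕ} (G : SimpleGraph V) (C : Sym2 V → Fin k) (c c' : Fin k)
    {u v : V} (w : G.Walk u v) : Prop :=
  ∃ x, G.Adj v x ∧ (C s(v, x) = c ∨ C s(v, x) = c') ∧ s(v, x) ∉ w.edges ∧
    ∀ h : w.edges ≠ [], C s(v, x) ≠ C (w.edges.getLast h)

/-- A maximal alternating walk: alternating and not extendable at either end. -/
def IsMaximalAltWalk {k : ℕ} (G : SimpleGraph V) (C : Sym2 V → Fin k) (c c' : Fin k)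
    {u v : V} (w : G.Walk u v) : Prop :=
  IsAltWalk G C c c' w ∧ ¬ ExtendableAtEnd G C c c' w ∧ ¬ ExtendableAtEnd G C c c' w.reverse

/-- Swap the colors `c` and `c'` on the edges in `S`. -/
noncomputable def flipOn {k : ℕ} (C : Sym2 V → Fin k) (c c' : Fin k) (S : Set (Sym2 V)) :
    Sym2 V → Fin k := fun e =>
  haveI := Classical.dec (e ∈ S)
  if e ∈ S then Equiv.swap c c' (C e) else C e

private lemma aux_alt {k : ℕ} {G : SimpleGraph V} {C : Sym2 V → Fin k} {c c' : Fin k} {v₁ : V}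
    (s : V → Bool) (hs : ∀ u v, G.Adj u v → s u ≠ s v)
    (hno : ∀ e ∈ G.edgeSet, v₁ ∈ e → C e ≠ c') (hcc : c ≠ c') :
    ∀ {u x : V} (w : G.Walk u x) (d : Fin k), (d = c ∨ d = c') →
      IsAltWalk G C c c' w → (∀ h : w.edges ≠ [], C (w.edges.head h) = d) →
      (s u = s v₁ ↔ d = c) → v₁ ∉ w.support.tail := by
  intro u x w
  induction w with
  | nil => intro d _ _ _ _; simp
  | @cons u u' x h p ih =>
    intro d hd halt hhead hiff
    have hCe : C s(u, u') = d := hhead (by simp)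
    have hne : u' ≠ v₁ := by
      intro he
      have hmem : s(u, u') ∈ G.edgeSet := G.mem_edgeSet.mpr h
      have hnc' : C s(u, u') ≠ c' := hno _ hmem (he ▸ Sym2.mem_mk_right u u')
      have hdc : d = c := by
        rcases hd with h1 | h1
        · exact h1
        · exact absurd (hCe.trans h1) hnc'
      have hsu := hs u u' h
      rw [he, hiff.mpr hdc] at hsu
      exact hsu rfl
    simp only [Walk.support_cons, List.tail_cons]
    rw [Walk.support_eq_cons p]
    intro hmem
    rcases List.mem_cons.mp hmem with h1 | h1
    · exact hne h1.symm
    · set d' : Fin k := if d = c then c' else c with hd'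
      refine ih d' ?_ ?_ ?_ ?_ h1
      · by_cases hdc : d = c <;> simp [hd', hdc]
      · refine ⟨fun e he => halt.1 e (by simp [he]), ?_⟩
        have := halt.2
        rw [Walk.edges_cons] at this
        exact this.tail
      · intro hpe
        have hch := halt.2
        rw [Walk.edges_cons] at hch
        have hne2 : C s(u, u') ≠ C (p.edges.head hpe) :=
          (List.isChain_cons.mp hch).1 _ (by rw [List.head?_eq_head hpe]; rfl)
        have hmem2 : C (p.edges.head hpe) = c ∨ C (p.edges.head hpe) = c' :=
          halt.1 _ (by rw [Walk.edges_cons]; exact List.mem_cons_of_mem _ (List.head_mem hpe))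
        rw [hCe] at hne2
        by_cases hdc : d = c
        · rcases hmem2 with h2 | h2
          · exact absurd (hdc.trans h2.symm) hne2
          · rw [h2]; simp [hd', hdc]
        · have hdc' : d = c' := hd.resolve_left hdc
          rcases hmem2 with h2 | h2
          · rw [h2]; simp [hd', hdc]
          · exact absurd (hdc'.trans h2.symm) hne2
      · have hsu : s u ≠ s u' := hs u u' h
        by_cases hdc : d = c
        · have h3 : s u = s v₁ := hiff.mpr hdc
          have hd'c : d' ≠ c := by simp [hd', hdc]; exact Ne.symm hcc
          simp only [hd'c, iff_false]
          intro h4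
          exact hsu (h3.trans h4.symm)
        · have h3 : s u ≠ s v₁ := fun h4 => hdc (hiff.mp h4)
          have hd'c : d' = c := by simp [hd', hdc]
          simp only [hd'c, iff_true]
          revert hsu h3
          cases s u <;> cases s u' <;> cases s v₁ <;> simp

/-- If `v₁` has a `(+c−c')`-deficiency and at most one other vertex `v₂` is
deficient in a bipartite graph, then an alternating walk with colors `c`,`c'` starting at `v₁`
with a `c`-edge never returns to `v₁`. -/
theorem stmt1 {k : ℕ} (G : SimpleGraph V) (hbip : _root_.IsBipartite G)
    (C : Sym2 V → Fin k) (c c' : Fin k) (v₁ v₂ : V)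
    (hdef : HasDeficiency G C v₁ c c')
    (hothers : ∀ w, DeficientAt G C w → w = v₁ ∨ w = v₂) :
    ∀ (x : V) (w : G.Walk v₁ x), IsAltWalk G C c c' w →
      (∀ h : w.edges ≠ [], C (w.edges.head h) = c) → v₁ ∉ w.support.tail := by
  obtain ⟨s, hs⟩ := hbip
  intro x w halt hfirst
  cases w with
  | nil => simp
  | @cons _ u' _ h p =>
    have hCe : C s(v₁, u') = c := hfirst (by simp)
    have hcc : c ≠ c' := by
      intro hcc
      exact hdef.2.1 _ (G.mem_edgeSet.mpr h) (by simp) (hCe.trans hcc)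
    exact aux_alt s hs hdef.2.1 hcc (Walk.cons h p) c (Or.inl rfl) halt hfirst (by simp)
end

section
/- Let C be an almost edge k-coloring of a bipartite graph G with one or two deficient vertices. Then C can be transformed into a proper edge k-coloring by flipping the colors along at most two alternating walks, each using two colors c and c'. -/
open SimpleGraph

variable {V : Type*}

namespace Stmt2Aux

open SimpleGraph

variable {V : Type*} {k : ℕ}

/-- all edges at `z` have pairwise distinct colors -/
def ProperAt (G : SimpleGraph V) (C : Sym2 V → Fin k) (z : V) : Prop :=
  ∀ f ∈ G.edgeSet, ∀ g ∈ G.edgeSet, z ∈ f → z ∈ g → f ≠ g → C f ≠ C g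

/-- `u` has at most one repeated color `d` (repeated at most twice), and some color `d'` is
absent at `u`. -/
def Shape (G : SimpleGraph V) (C : Sym2 V → Fin k) (u : V) : Prop :=
  ∃ d d' : Fin k, d ≠ d' ∧ (∀ e ∈ G.edgeSet, u ∈ e → C e ≠ d') ∧
    (∀ f ∈ G.edgeSet, ∀ g ∈ G.edgeSet, u ∈ f → u ∈ g → f ≠ g → C f ≠ d → C f ≠ C g) ∧
    (∀ f ∈ G.edgeSet, ∀ g ∈ G.edgeSet, ∀ h ∈ G.edgeSet, u ∈ f → u ∈ g → u ∈ h →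
      f ≠ g → f ≠ h → g ≠ h → ¬(C f = d ∧ C g = d ∧ C h = d))

lemma flipOn_mem (C : Sym2 V → Fin k) (a b : Fin k) (S : Set (Sym2 V)) {e : Sym2 V}
    (he : e ∈ S) : flipOn C a b S e = Equiv.swap a b (C e) := by
  unfold flipOn
  exact if_pos he

lemma flipOn_not_mem (C : Sym2 V → Fin k) (a b : Fin k) (S : Set (Sym2 V)) {e : Sym2 V}
    (he : e ∉ S) : flipOn C a b S e = C e := by
  unfold flipOn
  exact if_neg he

lemma flipOn_self (C : Sym2 V → Fin k) (a : Fin k) (S : Set (Sym2 V)) :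
    flipOn C a a S = C := by
  funext e
  unfold flipOn
  split <;> simp [Equiv.swap_self]

lemma edges_getElem {G : SimpleGraph V} {a b : V} (w : G.Walk a b) :
    ∀ (i : ℕ) (h : i < w.edges.length),
      w.edges[i] = s(w.getVert i, w.getVert (i+1)) := by
  induction w with
  | nil => intro i h; simp at h
  | cons hadj p ih =>
    intro i h
    cases i with
    | zero =>
      simp [Walk.getVert_zero, Walk.getVert_cons_succ]
    | succ j =>
      simp only [Walk.edges_cons, List.getElem_cons_succ, Walk.getVert_cons_succ]
      exact ih j (by simpa using h)

lemma getVert_parity {G : SimpleGraph V} {s : V → Bool}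
    (hs : ∀ a b, G.Adj a b → s a ≠ s b) {a b : V} (w : G.Walk a b) :
    ∀ i, i ≤ w.length → (s (w.getVert i) = s a ↔ Even i) := by
  induction w with
  | nil =>
    intro i hi
    simp only [Walk.length_nil, Nat.le_zero] at hi
    subst hi
    simp [Walk.getVert_zero]
  | @cons a a' b hadj p ih =>
    intro i hi
    cases i with
    | zero => simp [Walk.getVert_zero]
    | succ j =>
      rw [Walk.getVert_cons_succ]
      have hj : j ≤ p.length := by
        simpa [Nat.succ_le_succ_iff] using hi
      have h1 := ih j hj
      have h2 : s a ≠ s a' := hs _ _ hadj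
      have hb : ∀ x y z : Bool, y ≠ z → (x = z ↔ ¬ x = y) := by decide
      rw [Nat.even_add_one, ← h1]
      exact hb (s (p.getVert j)) (s a') (s a) h2.symm

lemma eq_mk_of_mem {G : SimpleGraph V} {a : V} {e : Sym2 V} (he : e ∈ G.edgeSet)
    (ha : a ∈ e) : ∃ b, G.Adj a b ∧ e = s(a, b) := by
  induction e with
  | _ x y =>
    rw [Sym2.mem_iff] at ha
    rw [SimpleGraph.mem_edgeSet] at he
    rcases ha with rfl | rfl
    · exact ⟨y, he, rfl⟩
    · exact ⟨x, he.symm, Sym2.eq_swap⟩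

open Classical in
noncomputable def prIdx {V : Type*} {G : SimpleGraph V} {v y : V} (w : G.Walk v y) (z : V)
    (i : ℕ) : ℕ :=
  if z = w.getVert (i+1) then i+1 else i-1

lemma partner {G : SimpleGraph V} (C : Sym2 V → Fin k) (c c' : Fin k)
    {v y : V} (w : G.Walk v y) (hT : w.edges.Nodup)
    (hA : ∀ (i : ℕ) (h : i < w.edges.length), C w.edges[i] = if Even i then c else c')
    {z : V} (hzv : z ≠ v) {i : ℕ} (hi : i < w.edges.length) (hz : z ∈ w.edges[i])
    (hnt : ¬(z = w.getVert (i+1) ∧ i+1 = w.edges.length)) :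
    ∃ hj : prIdx w z i < w.edges.length,
      z ∈ w.edges[prIdx w z i] ∧ w.edges[prIdx w z i] ≠ w.edges[i] ∧
      C (w.edges[prIdx w z i]) = Equiv.swap c c' (C w.edges[i]) ∧
      ¬(z = w.getVert (prIdx w z i + 1) ∧ prIdx w z i + 1 = w.edges.length) ∧
      prIdx w z (prIdx w z i) = i ∧
      (z = w.getVert w.edges.length → prIdx w z i ≠ w.edges.length - 1) := by
  classical
  have hlen : w.edges.length = w.length := w.length_edges
  have hadj : ∀ j, j < w.edges.length → G.Adj (w.getVert j) (w.getVert (j+1)) := by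
    intro j hj
    exact w.adj_getVert_succ (by omega)
  have hne : ∀ j, j < w.edges.length → w.getVert j ≠ w.getVert (j+1) :=
    fun j hj => (hadj j hj).ne
  have hzi : z = w.getVert i ∨ z = w.getVert (i+1) := by
    rw [edges_getElem w i hi, Sym2.mem_iff] at hz
    exact hz
  have hswapcol : ∀ j : ℕ, Equiv.swap c c' (if Even j then c else c')
      = if Even (j+1) then c else c' := by
    intro j
    by_cases hj : Even j
    · simp [hj, Nat.even_add_one, Equiv.swap_apply_left]
    · simp [hj, Nat.even_add_one, Equiv.swap_apply_right]
  by_cases hc : z = w.getVert (i+1)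
  · have hpr : prIdx w z i = i + 1 := if_pos hc
    have h1 : i + 1 < w.edges.length := lt_of_le_of_ne hi (fun h => hnt ⟨hc, h⟩)
    have hnt1 : ¬ z = w.getVert (i+1+1) := by
      intro h2
      exact hne (i+1) h1 (hc ▸ h2 ▸ rfl)
    refine ⟨by rw [hpr]; exact h1, ?_, ?_, ?_, ?_, ?_, ?_⟩
    · simp only [hpr]
      rw [edges_getElem w (i+1) h1, Sym2.mem_iff]
      exact Or.inl hc
    · simp only [hpr]
      intro he
      exact absurd ((List.Nodup.getElem_inj_iff hT).mp he) (by omega)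
    · simp only [hpr]
      rw [hA (i+1) h1, hA i hi, hswapcol]
    · simp only [hpr]
      rintro ⟨h2, -⟩
      exact hnt1 h2
    · simp only [hpr]
      unfold prIdx
      rw [if_neg hnt1]
      omega
    · intro hzn
      simp only [hpr]
      intro hq
      have hn1 : w.edges.length - 1 + 1 = w.edges.length := by omega
      exact hne (w.edges.length - 1) (by omega) (by rw [hn1, ← hzn, ← hq, ← hc])
  · have hzv' : z = w.getVert i := hzi.resolve_right hc
    have hi0 : i ≠ 0 := by
      intro h0
      apply hzv
      rw [hzv', h0, Walk.getVert_zero]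
    obtain ⟨j, rfl⟩ : ∃ j, i = j + 1 := ⟨i - 1, by omega⟩
    have hpr : prIdx w z (j+1) = j := by
      unfold prIdx
      rw [if_neg hc]
      omega
    have hj : j < w.edges.length := by omega
    refine ⟨by rw [hpr]; exact hj, ?_, ?_, ?_, ?_, ?_, ?_⟩
    · simp only [hpr]
      rw [edges_getElem w j hj, Sym2.mem_iff]
      exact Or.inr hzv'
    · simp only [hpr]
      intro he
      exact absurd ((List.Nodup.getElem_inj_iff hT).mp he) (by omega)
    · simp only [hpr]
      rw [hA j hj, hA (j+1) hi, ← hswapcol j, Equiv.swap_apply_self]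
    · simp only [hpr]
      rintro ⟨-, h2⟩
      omega
    · simp only [hpr]
      unfold prIdx
      rw [if_pos hzv']
    · intro _
      simp only [hpr]
      omega

lemma exists_max_trail {G : SimpleGraph V} [Fintype V] (C : Sym2 V → Fin k) (c c' : Fin k)
    {v x₀ : V} (h₀ : G.Adj v x₀) (hc₀ : C s(v, x₀) = c) :
    ∃ (y : V) (w : G.Walk v y), w.edges.Nodup ∧
      (∀ (i : ℕ) (h : i < w.edges.length), C w.edges[i] = if Even i then c else c') ∧
      [s(v, x₀)] <+: w.edges ∧
      (∀ x, G.Adj y x → C s(y, x) = (if Even w.edges.length then c else c') →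
        s(y, x) ∈ w.edges) := by
  classical
  suffices H : ∀ (m : ℕ) (y : V) (w : G.Walk v y), w.edges.Nodup →
      (∀ (i : ℕ) (h : i < w.edges.length), C w.edges[i] = if Even i then c else c') →
      [s(v, x₀)] <+: w.edges →
      Fintype.card (Sym2 V) ≤ w.edges.length + m →
      ∃ (y' : V) (w' : G.Walk v y'), w'.edges.Nodup ∧
        (∀ (i : ℕ) (h : i < w'.edges.length), C w'.edges[i] = if Even i then c else c') ∧
        [s(v, x₀)] <+: w'.edges ∧
        (∀ x, G.Adj y' x → C s(y', x) = (if Even w'.edges.length then c else c') →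
          s(y', x) ∈ w'.edges) by
    refine H (Fintype.card (Sym2 V)) x₀ (Walk.cons h₀ Walk.nil) ?_ ?_ ?_ ?_
    · simp
    · intro i h
      simp only [Walk.edges_cons, Walk.edges_nil, List.length_cons, List.length_nil] at h
      have : i = 0 := by omega
      subst this
      simpa using hc₀
    · simp
    · simp
  intro m
  induction m with
  | zero =>
    intro y w hT hA hpre hcard
    refine ⟨y, w, hT, hA, hpre, ?_⟩
    intro x hadj hcol
    by_contra hfresh
    have hnodup : (w.edges.concat s(y, x)).Nodup := by
      rw [List.concat_eq_append, List.nodup_append]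
      refine ⟨hT, by simp, by simp; exact fun a ha h => hfresh (h ▸ ha)⟩
    have hle := List.Nodup.length_le_card hnodup
    rw [List.length_concat] at hle
    omega
  | succ m ih =>
    intro y w hT hA hpre hcard
    by_cases hex : ∃ x, G.Adj y x ∧ C s(y, x) = (if Even w.edges.length then c else c') ∧
        s(y, x) ∉ w.edges
    · obtain ⟨x, hadj, hcx, hfr⟩ := hex
      have hedges : (w.concat hadj).edges = w.edges.concat s(y, x) := w.edges_concat hadj
      refine ih x (w.concat hadj) ?_ ?_ ?_ ?_
      · rw [hedges, List.concat_eq_append, List.nodup_append]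
        refine ⟨hT, by simp, by simp; exact fun a ha h => hfr (h ▸ ha)⟩
      · intro i h
        have h' : i < w.edges.length + 1 := by
          rw [hedges, List.length_concat] at h
          exact h
        simp only [hedges, List.concat_eq_append]
        by_cases hi' : i < w.edges.length
        · rw [List.getElem_append_left hi']
          exact hA i hi'
        · have hieq : i = w.edges.length := by omega
          rw [List.getElem_concat_length hieq]
          rw [hieq]
          exact hcx
      · rw [hedges, List.concat_eq_append]
        exact hpre.trans (List.prefix_append _ _)
      · rw [hedges, List.length_concat]
        omega
    · push_neg at hex
      refine ⟨y, w, hT, hA, hpre, ?_⟩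
      intro x hadj hcol
      by_contra hfresh
      exact hfresh (hex x hadj hcol)

lemma roundLemma {G : SimpleGraph V} [Fintype V] {s : V → Bool}
    (hs : ∀ a b, G.Adj a b → s a ≠ s b) (C : Sym2 V → Fin k) (c c' : Fin k) (hcc : c ≠ c')
    {v u : V} (hvu : v ≠ u) {e₀ e₁ : Sym2 V}
    (he₀E : e₀ ∈ G.edgeSet) (he₁E : e₁ ∈ G.edgeSet) (hne01 : e₀ ≠ e₁)
    (hv0 : v ∈ e₀) (hv1 : v ∈ e₁) (hc0 : C e₀ = c) (hc1 : C e₁ = c)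
    (hvc : ∀ e ∈ G.edgeSet, v ∈ e → C e = c → e = e₀ ∨ e = e₁)
    (hvc' : ∀ e ∈ G.edgeSet, v ∈ e → C e ≠ c')
    (hvd : ∀ f ∈ G.edgeSet, ∀ g ∈ G.edgeSet, v ∈ f → v ∈ g → f ≠ g → C f ≠ c → C f ≠ C g)
    (hother : ∀ z, z ≠ v → z ≠ u → ProperAt G C z) :
    ∃ (y : V) (w : G.Walk v y),
      IsAltWalk G C c c' w ∧
      (∀ z, z ≠ u → ProperAt G (flipOn C c c' {e | e ∈ w.edges}) z) ∧
      (Shape G C u → Shape G (flipOn C c c' {e | e ∈ w.edges}) u ∨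
        ProperAt G (flipOn C c c' {e | e ∈ w.edges}) u) ∧
      (ProperAt G C u → ProperAt G (flipOn C c c' {e | e ∈ w.edges}) u) := by
  classical
  obtain ⟨x₀, hadj₀, he₀eq⟩ := eq_mk_of_mem he₀E hv0
  rw [he₀eq] at hc0
  obtain ⟨y, w, hT, hA, hpre, hMax⟩ := exists_max_trail C c c' hadj₀ hc0
  rw [← he₀eq] at hc0 hpre
  have hlen : w.edges.length = w.length := w.length_edges
  have hmemE : ∀ {e : Sym2 V}, e ∈ w.edges → e ∈ G.edgeSet := fun he => w.edges_subset_edgeSet he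
  have hn1 : 0 < w.edges.length := lt_of_lt_of_le (by norm_num) hpre.length_le
  have h0 : w.edges[0]'hn1 = e₀ := by
    have h := hpre.getElem (by norm_num : (0:ℕ) < ([e₀] : List (Sym2 V)).length)
    simpa using h.symm
  have he₀w : e₀ ∈ w.edges := h0 ▸ List.getElem_mem hn1
  have hgvn : w.getVert w.edges.length = y := by rw [hlen]; exact w.getVert_length
  have hpar : ∀ i, i ≤ w.edges.length → (s (w.getVert i) = s v ↔ Even i) := by
    intro i hi
    exact getVert_parity hs w i (by omega)
  have hswapcol : ∀ j : ℕ, Equiv.swap c c' (if Even j then c else c')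
      = if Even (j+1) then c else c' := by
    intro j
    by_cases hj : Even j
    · simp [hj, Nat.even_add_one, Equiv.swap_apply_left]
    · simp [hj, Nat.even_add_one, Equiv.swap_apply_right]
  have hcmem : ∀ {e : Sym2 V}, e ∈ w.edges → (C e = c ∨ C e = c') := by
    intro e he
    obtain ⟨i, hi, he'⟩ := List.mem_iff_getElem.mp he
    subst he'
    rw [hA i hi]
    split
    · exact Or.inl rfl
    · exact Or.inr rfl
  have hC₁mem : ∀ {e : Sym2 V}, e ∈ w.edges →
      flipOn C c c' {e | e ∈ w.edges} e = Equiv.swap c c' (C e) :=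
    fun he => flipOn_mem C c c' _ he
  have hC₁nm : ∀ {e : Sym2 V}, e ∉ w.edges →
      flipOn C c c' {e | e ∈ w.edges} e = C e :=
    fun he => flipOn_not_mem C c c' _ he
  have he₁w : e₁ ∉ w.edges := by
    intro hmem
    obtain ⟨i, hi, hie⟩ := List.mem_iff_getElem.mp hmem
    have hceq : C w.edges[i] = c := by rw [hie]; exact hc1
    have hEv : Even i := by
      by_contra hodd
      rw [hA i hi, if_neg hodd] at hceq
      exact hcc hceq.symm
    have hvmem : v ∈ w.edges[i] := by rw [hie]; exact hv1
    rw [edges_getElem w i hi, Sym2.mem_iff] at hvmem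
    rcases hvmem with hvi | hvi1
    · cases i with
      | zero =>
        apply hne01
        rw [← h0, hie]
      | succ j =>
        have hj : j < w.edges.length := by omega
        have hvj : v ∈ w.edges[j] := by
          rw [edges_getElem w j hj, Sym2.mem_iff]
          exact Or.inr hvi
        have hOdd : ¬ Even j := by
          rw [Nat.even_add_one] at hEv
          exact hEv
        have hcj : C w.edges[j] = c' := by
          rw [hA j hj, if_neg hOdd]
        exact hvc' _ (hmemE (List.getElem_mem hj)) hvj hcj
    · have hEv1 : Even (i+1) := by
        rw [← hpar (i+1) (by omega), ← hvi1]
      rw [Nat.even_add_one] at hEv1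
      exact hEv1 hEv
  have hMax' : ∀ g ∈ G.edgeSet, y ∈ g → C g = (if Even w.edges.length then c else c') →
      g ∈ w.edges := by
    intro g hgE hyg hgc
    obtain ⟨x, hadj, heq⟩ := eq_mk_of_mem hgE hyg
    rw [heq] at hgc ⊢
    exact hMax x hadj hgc
  have hmix : ∀ z, z ≠ u → ∀ f ∈ G.edgeSet, ∀ g ∈ G.edgeSet, z ∈ f → z ∈ g →
      f ∈ w.edges → g ∉ w.edges → C g = Equiv.swap c c' (C f) → False := by
    intro z hzu f hfE g hgE hzf hzg hfw hgw hCeq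
    by_cases hzv : z = v
    · subst hzv
      rcases hcmem hfw with hfc | hfc
      · rw [hfc, Equiv.swap_apply_left] at hCeq
        exact hvc' g hgE hzg hCeq
      · exact hvc' f hfE hzf hfc
    · obtain ⟨i, hi, hif⟩ := List.mem_iff_getElem.mp hfw
      subst hif
      by_cases hterm : z = w.getVert (i+1) ∧ i+1 = w.edges.length
      · have hzy : z = y := by rw [hterm.1, hterm.2, hgvn]
        have hgcol : C g = (if Even w.edges.length then c else c') := by
          rw [hCeq, hA i hi, hswapcol i, hterm.2]
        exact hgw (hMax' g hgE (hzy ▸ hzg) hgcol)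
      · obtain ⟨hj, hzj, hjne, hjcol, -, -, -⟩ :=
          partner C c c' w hT hA hzv hi hzf hterm
        have hjw : w.edges[prIdx w z i] ∈ w.edges := List.getElem_mem hj
        have hjg : w.edges[prIdx w z i] ≠ g := fun h => hgw (h ▸ hjw)
        exact hother z hzv hzu _ (hmemE hjw) g hgE hzj hzg hjg (hjcol.trans hCeq.symm)
  have hproper : ∀ z, z ≠ u → ProperAt G (flipOn C c c' {e | e ∈ w.edges}) z := by
    intro z hzu f hfE g hgE hzf hzg hfg hCeq
    by_cases hfw : f ∈ w.edges <;> by_cases hgw : g ∈ w.edges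
    · rw [hC₁mem hfw, hC₁mem hgw] at hCeq
      have hCeq' : C f = C g := (Equiv.swap c c').injective hCeq
      by_cases hzv : z = v
      · subst hzv
        rcases hcmem hfw with hfc | hfc
        · rcases hvc f hfE hzf hfc with rfl | rfl
          · have hgc : C g = c := by rw [← hCeq']; exact hfc
            rcases hvc g hgE hzg hgc with rfl | rfl
            · exact hfg rfl
            · exact he₁w hgw
          · exact he₁w hfw
        · exact hvc' f hfE hzf hfc
      · exact hother z hzv hzu f hfE g hgE hzf hzg hfg hCeq'
    · rw [hC₁mem hfw, hC₁nm hgw] at hCeq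
      exact hmix z hzu f hfE g hgE hzf hzg hfw hgw hCeq.symm
    · rw [hC₁nm hfw, hC₁mem hgw] at hCeq
      exact hmix z hzu g hgE f hfE hzg hzf hgw hfw hCeq
    · rw [hC₁nm hfw, hC₁nm hgw] at hCeq
      by_cases hzv : z = v
      · subst hzv
        by_cases hfc : C f = c
        · rcases hvc f hfE hzf hfc with rfl | rfl
          · exact hfw he₀w
          · have hgc : C g = c := by rw [← hCeq]; exact hfc
            rcases hvc g hgE hzg hgc with rfl | rfl
            · exact hgw he₀w
            · exact hfg rfl
        · exact hvd f hfE g hgE hzf hzg hfg hfc hCeq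
      · exact hother z hzv hzu f hfE g hgE hzf hzg hfg hCeq
  have hAW : IsAltWalk G C c c' w := by
    constructor
    · intro e he
      exact hcmem he
    · rw [List.Chain', List.isChain_iff_getElem]
      intro i hlt
      have h1 : i < w.edges.length := by omega
      have h2 : i + 1 < w.edges.length := by omega
      rw [hA i h1, hA (i+1) h2]
      by_cases he : Even i <;> simp [he, Nat.even_add_one, hcc, hcc.symm, Ne.symm]
  by_cases huy : u = y
  · -- Case II : u is the end of the walk
    subst huy
    have hnidx : w.edges.length - 1 + 1 = w.edges.length := by omega
    have hnlt : w.edges.length - 1 < w.edges.length := by omega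
    have hulL : u ∈ w.edges[w.edges.length - 1] := by
      rw [edges_getElem w _ hnlt, Sym2.mem_iff]
      right
      rw [hnidx, hgvn]
    have hlLw : w.edges[w.edges.length - 1]'hnlt ∈ w.edges := List.getElem_mem hnlt
    set lL := w.edges[w.edges.length - 1]'hnlt with hlLdef
    have hswγ : Equiv.swap c c' (C lL) = (if Even w.edges.length then c else c') := by
      rw [hlLdef, hA _ hnlt, hswapcol, hnidx]
    have hMaxII : ∀ g ∈ G.edgeSet, u ∈ g → g ∉ w.edges →
        C g ≠ Equiv.swap c c' (C lL) := by
      intro g hgE hug hgw hceq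
      exact hgw (hMax' g hgE hug (by rw [hceq, hswγ]))
    have hγswne : Equiv.swap c c' (C lL) ≠ C lL := by
      rcases hcmem hlLw with h | h <;> rw [h]
      · rw [Equiv.swap_apply_left]; exact hcc.symm
      · rw [Equiv.swap_apply_right]; exact hcc
    set stII : Sym2 V → Sym2 V := fun f =>
      if h : f ∈ w.edges ∧ u ∈ f ∧ f ≠ lL then
        w.edges.getD (prIdx w u (w.edges.idxOf f)) f else f with hstIIdef
    have hstII : ∀ f ∈ G.edgeSet, u ∈ f → f ≠ lL →
        (flipOn C c c' {e | e ∈ w.edges}) f = C (stII f) ∧ stII f ∈ G.edgeSet ∧ u ∈ stII f ∧ stII f ≠ lL ∧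
          stII (stII f) = f := by
      intro f hfE huf hfL
      by_cases hfw : f ∈ w.edges
      · have hidx : w.edges.idxOf f < w.edges.length := List.idxOf_lt_length_iff.mpr hfw
        have hget : w.edges[w.edges.idxOf f] = f := List.getElem_idxOf hidx
        have huf' : u ∈ w.edges[w.edges.idxOf f] := by rw [hget]; exact huf
        have hnt : ¬(u = w.getVert (w.edges.idxOf f + 1) ∧
            w.edges.idxOf f + 1 = w.edges.length) := by
          rintro ⟨h1, h2⟩
          apply hfL
          rw [← hget, hlLdef]
          congr 1
          omega
        obtain ⟨hj, huj, hjne, hjcol, hjnt, hjcl, hjlast⟩ :=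
          partner C c c' w hT hA (Ne.symm hvu) hidx huf' hnt
        have hjL : prIdx w u (w.edges.idxOf f) ≠ w.edges.length - 1 :=
          hjlast (by rw [hgvn])
        have hcond : f ∈ w.edges ∧ u ∈ f ∧ f ≠ lL := ⟨hfw, huf, hfL⟩
        have hst1 : stII f = w.edges[prIdx w u (w.edges.idxOf f)] := by
          simp only [hstIIdef]
          rw [dif_pos hcond]
          exact List.getD_eq_getElem _ _ hj
        have hstL : stII f ≠ lL := by
          rw [hst1, hlLdef]
          intro h
          exact hjL ((List.Nodup.getElem_inj_iff hT).mp h)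
        refine ⟨?_, by rw [hst1]; exact hmemE (List.getElem_mem hj),
          by rw [hst1]; exact huj, hstL, ?_⟩
        · rw [hC₁mem hfw, hst1, hjcol, hget]
        · have hcond2 : w.edges[prIdx w u (w.edges.idxOf f)] ∈ w.edges ∧
              u ∈ w.edges[prIdx w u (w.edges.idxOf f)] ∧
              w.edges[prIdx w u (w.edges.idxOf f)] ≠ lL :=
            ⟨List.getElem_mem hj, huj, by rw [← hst1]; exact hstL⟩
          rw [hst1]
          simp only [hstIIdef]
          rw [dif_pos hcond2, List.Nodup.idxOf_getElem hT _ hj, hjcl,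
            List.getD_eq_getElem _ _ hidx, hget]
      · have hst1 : stII f = f := by
          rw [hstIIdef]
          exact dif_neg (by tauto)
        exact ⟨by rw [hst1, hC₁nm hfw], by rw [hst1]; exact hfE, by rw [hst1]; exact huf,
          by rw [hst1]; exact hfL, by rw [hst1, hst1]⟩
    have hC₁lL : (flipOn C c c' {e | e ∈ w.edges}) lL = Equiv.swap c c' (C lL) := hC₁mem hlLw
    refine ⟨u, w, hAW, hproper, ?_, ?_⟩
    · -- Shape → Shape ∨ Proper
      rintro ⟨d, d', hdd', hnod', hnond, hle2⟩
      by_cases hbar : ∃ e2, e2 ∈ G.edgeSet ∧ u ∈ e2 ∧ C e2 = Equiv.swap c c' (C lL)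
      · obtain ⟨e2, he2E, hue2, he2c⟩ := hbar
        have he2L : e2 ≠ lL := fun h => hγswne (h ▸ he2c).symm
        obtain ⟨hce2, he2E', hue2', he2L', hcl2⟩ := hstII e2 he2E hue2 he2L
        have he2w : e2 ∈ w.edges := by
          by_contra hnw
          exact hMaxII e2 he2E hue2 hnw he2c
        have hcp : C (stII e2) = C lL := by
          rw [← hce2, hC₁mem he2w, he2c, Equiv.swap_apply_self]
        have hγd : C lL = d := by
          by_contra hγd
          exact hnond (stII e2) he2E' lL (hmemE hlLw) hue2' hulL he2L'
            (by rw [hcp]; exact hγd) (by rw [hcp])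
        have huniq : ∀ e ∈ G.edgeSet, u ∈ e → C e = Equiv.swap c c' (C lL) → e = e2 := by
          intro e heE hue hec
          have heL : e ≠ lL := fun h => hγswne (h ▸ hec).symm
          obtain ⟨hce, heE', hue', heL', hcle⟩ := hstII e heE hue heL
          have hew : e ∈ w.edges := by
            by_contra hnw
            exact hMaxII e heE hue hnw hec
          have hcpe : C (stII e) = C lL := by
            rw [← hce, hC₁mem hew, hec, Equiv.swap_apply_self]
          by_cases hpp : stII e = stII e2
          · rw [← hcle, hpp, hcl2]
          · exact absurd ⟨by rw [hcpe]; exact hγd, by rw [hcp]; exact hγd, hγd⟩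
              (hle2 (stII e) heE' (stII e2) he2E' lL (hmemE hlLw) hue' hue2' hulL
                hpp heL' he2L')
        have hswd' : Equiv.swap c c' (C lL) ≠ d' :=
          fun h => hnod' e2 he2E hue2 (he2c.trans h)
        left
        refine ⟨Equiv.swap c c' (C lL), d', hswd', ?_, ?_, ?_⟩
        · intro e heE hue hed'
          by_cases heL : e = lL
          · rw [heL, hC₁lL] at hed'
            exact hswd' hed'
          · obtain ⟨hce, heE', hue', -, -⟩ := hstII e heE hue heL
            exact hnod' (stII e) heE' hue' (by rw [← hce]; exact hed')
        · intro f hfE g hgE huf hug hfg hfsw hCeq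
          have hfL : f ≠ lL := fun h => hfsw (by rw [h, hC₁lL])
          have hgL : g ≠ lL := fun h => hfsw (hCeq.trans (by rw [h, hC₁lL]))
          obtain ⟨hcf, hfE', huf', hfL', hclf⟩ := hstII f hfE huf hfL
          obtain ⟨hcg, hgE', hug', hgL', hclg⟩ := hstII g hgE hug hgL
          have hstfg : stII f ≠ stII g := fun hq => hfg (by rw [← hclf, hq, hclg])
          by_cases hd : (flipOn C c c' {e | e ∈ w.edges}) f = d
          · exact hle2 (stII f) hfE' (stII g) hgE' lL (hmemE hlLw) huf' hug' hulL
              hstfg hfL' hgL'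
              ⟨by rw [← hcf]; exact hd, by rw [← hcg, ← hCeq]; exact hd, hγd⟩
          · exact hnond (stII f) hfE' (stII g) hgE' huf' hug' hstfg
              (by rw [← hcf]; exact hd) (by rw [← hcf, ← hcg]; exact hCeq)
        · intro f hfE g hgE h hhE huf hug huh hfg hfh hgh hcs
          obtain ⟨hf, hg, hh⟩ := hcs
          have key : ∀ e ∈ G.edgeSet, u ∈ e → (flipOn C c c' {e | e ∈ w.edges}) e = Equiv.swap c c' (C lL) →
              e = lL ∨ e = stII e2 := by
            intro e heE hue hec
            by_cases heL : e = lL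
            · exact Or.inl heL
            · right
              obtain ⟨hce, heE', hue', -, hcle⟩ := hstII e heE hue heL
              have he2' : stII e = e2 := huniq (stII e) heE' hue' (by rw [← hce]; exact hec)
              rw [← hcle, he2']
          rcases key f hfE huf hf with h1 | h1 <;> rcases key g hgE hug hg with h2 | h2 <;>
            rcases key h hhE huh hh with h3 | h3
          · exact hfg (h1.trans h2.symm)
          · exact hfg (h1.trans h2.symm)
          · exact hfh (h1.trans h3.symm)
          · exact hgh (h2.trans h3.symm)
          · exact hgh (h2.trans h3.symm)
          · exact hfh (h1.trans h3.symm)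
          · exact hfg (h1.trans h2.symm)
          · exact hfg (h1.trans h2.symm)
      · push_neg at hbar
        by_cases hγd : C lL = d
        · right
          intro f hfE g hgE huf hug hfg hCeq
          by_cases hfL : f = lL
          · have hgL : g ≠ lL := by rw [← hfL]; exact Ne.symm hfg
            obtain ⟨hcg, hgE', hug', -, -⟩ := hstII g hgE hug hgL
            exact hbar (stII g) hgE' hug' (by rw [← hcg, ← hCeq, hfL, hC₁lL])
          · by_cases hgL : g = lL
            · obtain ⟨hcf, hfE', huf', -, -⟩ := hstII f hfE huf hfL
              exact hbar (stII f) hfE' huf' (by rw [← hcf, hCeq, hgL, hC₁lL])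
            · obtain ⟨hcf, hfE', huf', hfL', hclf⟩ := hstII f hfE huf hfL
              obtain ⟨hcg, hgE', hug', hgL', hclg⟩ := hstII g hgE hug hgL
              have hstfg : stII f ≠ stII g := fun hq => hfg (by rw [← hclf, hq, hclg])
              by_cases hd : (flipOn C c c' {e | e ∈ w.edges}) f = d
              · exact hle2 (stII f) hfE' (stII g) hgE' lL (hmemE hlLw) huf' hug' hulL
                  hstfg hfL' hgL'
                  ⟨by rw [← hcf]; exact hd, by rw [← hcg, ← hCeq]; exact hd, hγd⟩
              · exact hnond (stII f) hfE' (stII g) hgE' huf' hug' hstfg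
                  (by rw [← hcf]; exact hd) (by rw [← hcf, ← hcg]; exact hCeq)
        · left
          refine ⟨d, C lL, fun hq => hγd hq.symm, ?_, ?_, ?_⟩
          · intro e heE hue hec
            by_cases heL : e = lL
            · rw [heL, hC₁lL] at hec
              exact hγswne hec
            · obtain ⟨hce, heE', hue', heL', -⟩ := hstII e heE hue heL
              exact hnond (stII e) heE' lL (hmemE hlLw) hue' hulL heL'
                (by rw [← hce, hec]; exact hγd) (by rw [← hce]; exact hec)
          · intro f hfE g hgE huf hug hfg hfd hCeq
            by_cases hfL : f = lL
            · have hgL : g ≠ lL := by rw [← hfL]; exact Ne.symm hfg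
              obtain ⟨hcg, hgE', hug', -, -⟩ := hstII g hgE hug hgL
              exact hbar (stII g) hgE' hug' (by rw [← hcg, ← hCeq, hfL, hC₁lL])
            · by_cases hgL : g = lL
              · obtain ⟨hcf, hfE', huf', -, -⟩ := hstII f hfE huf hfL
                exact hbar (stII f) hfE' huf' (by rw [← hcf, hCeq, hgL, hC₁lL])
              · obtain ⟨hcf, hfE', huf', -, hclf⟩ := hstII f hfE huf hfL
                obtain ⟨hcg, hgE', hug', -, hclg⟩ := hstII g hgE hug hgL
                have hstfg : stII f ≠ stII g := fun hq => hfg (by rw [← hclf, hq, hclg])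
                exact hnond (stII f) hfE' (stII g) hgE' huf' hug' hstfg
                  (by rw [← hcf]; exact hfd) (by rw [← hcf, ← hcg]; exact hCeq)
          · intro f hfE g hgE h hhE huf hug huh hfg hfh hgh hcs
            obtain ⟨hf, hg, hh⟩ := hcs
            by_cases hswd : Equiv.swap c c' (C lL) = d
            · have key : ∀ e ∈ G.edgeSet, u ∈ e → (flipOn C c c' {e | e ∈ w.edges}) e = d → e = lL := by
                intro e heE hue hec
                by_contra heL
                obtain ⟨hce, heE', hue', -, -⟩ := hstII e heE hue heL
                exact hbar (stII e) heE' hue' (by rw [← hce, hec, ← hswd])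
              exact hfg ((key f hfE huf hf).trans (key g hgE hug hg).symm)
            · have hfL : f ≠ lL := fun hq => hswd (hC₁lL.symm.trans (by rw [← hq]; exact hf))
              have hgL : g ≠ lL := fun hq => hswd (hC₁lL.symm.trans (by rw [← hq]; exact hg))
              have hhL : h ≠ lL := fun hq => hswd (hC₁lL.symm.trans (by rw [← hq]; exact hh))
              obtain ⟨hcf, hfE', huf', -, hclf⟩ := hstII f hfE huf hfL
              obtain ⟨hcg, hgE', hug', -, hclg⟩ := hstII g hgE hug hgL
              obtain ⟨hch, hhE', huh', -, hclh⟩ := hstII h hhE huh hhL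
              exact hle2 (stII f) hfE' (stII g) hgE' (stII h) hhE' huf' hug' huh'
                (fun hq => hfg (by rw [← hclf, hq, hclg]))
                (fun hq => hfh (by rw [← hclf, hq, hclh]))
                (fun hq => hgh (by rw [← hclg, hq, hclh]))
                ⟨by rw [← hcf]; exact hf, by rw [← hcg]; exact hg, by rw [← hch]; exact hh⟩
    · -- ProperAt C u → ProperAt (flipOn C c c' {e | e ∈ w.edges}) u
      intro hP
      have hbar0 : ∀ e ∈ G.edgeSet, u ∈ e → C e ≠ Equiv.swap c c' (C lL) := by
        intro e heE hue hec
        have heL : e ≠ lL := fun hq => hγswne (hq ▸ hec).symm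
        have hew : e ∈ w.edges := by
          by_contra hnw
          exact hMaxII e heE hue hnw hec
        obtain ⟨hce, heE', hue', heL', -⟩ := hstII e heE hue heL
        have hcpe : C (stII e) = C lL := by
          rw [← hce, hC₁mem hew, hec, Equiv.swap_apply_self]
        exact hP (stII e) heE' lL (hmemE hlLw) hue' hulL heL' hcpe
      intro f hfE g hgE huf hug hfg hCeq
      by_cases hfL : f = lL
      · have hgL : g ≠ lL := by rw [← hfL]; exact Ne.symm hfg
        obtain ⟨hcg, hgE', hug', -, -⟩ := hstII g hgE hug hgL
        exact hbar0 (stII g) hgE' hug' (by rw [← hcg, ← hCeq, hfL, hC₁lL])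
      · by_cases hgL : g = lL
        · obtain ⟨hcf, hfE', huf', -, -⟩ := hstII f hfE huf hfL
          exact hbar0 (stII f) hfE' huf' (by rw [← hcf, hCeq, hgL, hC₁lL])
        · obtain ⟨hcf, hfE', huf', -, hclf⟩ := hstII f hfE huf hfL
          obtain ⟨hcg, hgE', hug', -, hclg⟩ := hstII g hgE hug hgL
          exact hP (stII f) hfE' (stII g) hgE' huf' hug'
            (fun hq => hfg (by rw [← hclf, hq, hclg]))
            (by rw [← hcf, ← hcg]; exact hCeq)
  · -- Case I : u is not the end of the walk
    set stI : Sym2 V → Sym2 V := fun f =>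
      if h : f ∈ w.edges ∧ u ∈ f then
        w.edges.getD (prIdx w u (w.edges.idxOf f)) f else f with hstIdef
    have hstI : ∀ f ∈ G.edgeSet, u ∈ f →
        (flipOn C c c' {e | e ∈ w.edges}) f = C (stI f) ∧ stI f ∈ G.edgeSet ∧ u ∈ stI f ∧ stI (stI f) = f := by
      intro f hfE huf
      by_cases hfw : f ∈ w.edges
      · have hidx : w.edges.idxOf f < w.edges.length := List.idxOf_lt_length_iff.mpr hfw
        have hget : w.edges[w.edges.idxOf f] = f := List.getElem_idxOf hidx
        have huf' : u ∈ w.edges[w.edges.idxOf f] := by rw [hget]; exact huf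
        have hnt : ¬(u = w.getVert (w.edges.idxOf f + 1) ∧
            w.edges.idxOf f + 1 = w.edges.length) := by
          rintro ⟨h1, h2⟩
          exact huy (by rw [h1, h2, hgvn])
        obtain ⟨hj, huj, hjne, hjcol, hjnt, hjcl, -⟩ :=
          partner C c c' w hT hA (Ne.symm hvu) hidx huf' hnt
        have hcond : f ∈ w.edges ∧ u ∈ f := ⟨hfw, huf⟩
        have hst1 : stI f = w.edges[prIdx w u (w.edges.idxOf f)] := by
          simp only [hstIdef]
          rw [dif_pos hcond]
          exact List.getD_eq_getElem _ _ hj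
        refine ⟨?_, by rw [hst1]; exact hmemE (List.getElem_mem hj),
          by rw [hst1]; exact huj, ?_⟩
        · rw [hC₁mem hfw, hst1, hjcol, hget]
        · have hcond2 : w.edges[prIdx w u (w.edges.idxOf f)] ∈ w.edges ∧
              u ∈ w.edges[prIdx w u (w.edges.idxOf f)] :=
            ⟨List.getElem_mem hj, huj⟩
          rw [hst1]
          simp only [hstIdef]
          rw [dif_pos hcond2, List.Nodup.idxOf_getElem hT _ hj, hjcl,
            List.getD_eq_getElem _ _ hidx, hget]
      · have hst1 : stI f = f := by
          rw [hstIdef]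
          exact dif_neg (by tauto)
        exact ⟨by rw [hst1, hC₁nm hfw], by rw [hst1]; exact hfE,
          by rw [hst1]; exact huf, by rw [hst1, hst1]⟩
    refine ⟨y, w, hAW, hproper, ?_, ?_⟩
    · rintro ⟨d, d', hdd', hnod', hnond, hle2⟩
      left
      refine ⟨d, d', hdd', ?_, ?_, ?_⟩
      · intro e heE hue hed'
        obtain ⟨hce, heE', hue', -⟩ := hstI e heE hue
        exact hnod' (stI e) heE' hue' (by rw [← hce]; exact hed')
      · intro f hfE g hgE huf hug hfg hfd hCeq
        obtain ⟨hcf, hfE', huf', hclf⟩ := hstI f hfE huf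
        obtain ⟨hcg, hgE', hug', hclg⟩ := hstI g hgE hug
        exact hnond (stI f) hfE' (stI g) hgE' huf' hug'
          (fun hq => hfg (by rw [← hclf, hq, hclg]))
          (by rw [← hcf]; exact hfd) (by rw [← hcf, ← hcg]; exact hCeq)
      · intro f hfE g hgE h hhE huf hug huh hfg hfh hgh hcs
        obtain ⟨hf, hg, hh⟩ := hcs
        obtain ⟨hcf, hfE', huf', hclf⟩ := hstI f hfE huf
        obtain ⟨hcg, hgE', hug', hclg⟩ := hstI g hgE hug
        obtain ⟨hch, hhE', huh', hclh⟩ := hstI h hhE huh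
        exact hle2 (stI f) hfE' (stI g) hgE' (stI h) hhE' huf' hug' huh'
          (fun hq => hfg (by rw [← hclf, hq, hclg]))
          (fun hq => hfh (by rw [← hclf, hq, hclh]))
          (fun hq => hgh (by rw [← hclg, hq, hclh]))
          ⟨by rw [← hcf]; exact hf, by rw [← hcg]; exact hg, by rw [← hch]; exact hh⟩
    · intro hP f hfE g hgE huf hug hfg hCeq
      obtain ⟨hcf, hfE', huf', hclf⟩ := hstI f hfE huf
      obtain ⟨hcg, hgE', hug', hclg⟩ := hstI g hgE hug
      exact hP (stI f) hfE' (stI g) hgE' huf' hug'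
        (fun hq => hfg (by rw [← hclf, hq, hclg]))
        (by rw [← hcf, ← hcg]; exact hCeq)

end Stmt2Aux

open Stmt2Aux in
/-- An almost edge `k`-coloring of a bipartite graph with one or two deficient
vertices can be transformed into a proper edge `k`-coloring by flipping the colors along at
most two alternating walks, each with two colors. -/
theorem stmt2 [Fintype V] {k : ℕ} (G : SimpleGraph V) (hbip : _root_.IsBipartite G)
    (C : Sym2 V → Fin k) (halmost : IsAlmostEdgeColoring G C)
    (hne : ∃ v, DeficientAt G C v) :
    ∃ (a b a' b' : Fin k) (x₁ y₁ x₂ y₂ : V) (w₁ : G.Walk x₁ y₁) (w₂ : G.Walk x₂ y₂),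
      IsAltWalk G C a b w₁ ∧
      IsAltWalk G (flipOn C a b {e | e ∈ w₁.edges}) a' b' w₂ ∧
      IsProperEdgeColoring G
        (flipOn (flipOn C a b {e | e ∈ w₁.edges}) a' b' {e | e ∈ w₂.edges}) := by
  classical
  obtain ⟨v, hv⟩ := hne
  obtain ⟨s, hs⟩ := hbip
  obtain ⟨hcard, hdef⟩ := halmost
  obtain ⟨c, c', hD⟩ := hdef v hv
  obtain ⟨h2, hvc', hvd⟩ := hD
  obtain ⟨e₀, e₁, hne01, hset⟩ := Set.ncard_eq_two.mp h2
  have he₀ : e₀ ∈ G.edgeSet ∧ v ∈ e₀ ∧ C e₀ = c := by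
    have h : e₀ ∈ {e ∈ G.edgeSet | v ∈ e ∧ C e = c} := by rw [hset]; simp
    exact ⟨h.1, h.2⟩
  have he₁ : e₁ ∈ G.edgeSet ∧ v ∈ e₁ ∧ C e₁ = c := by
    have h : e₁ ∈ {e ∈ G.edgeSet | v ∈ e ∧ C e = c} := by rw [hset]; simp
    exact ⟨h.1, h.2⟩
  obtain ⟨he₀E, hv0, hc0⟩ := he₀
  obtain ⟨he₁E, hv1, hc1⟩ := he₁
  have hvc : ∀ e ∈ G.edgeSet, v ∈ e → C e = c → e = e₀ ∨ e = e₁ := by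
    intro e heE hve hec
    have hmem : e ∈ {e ∈ G.edgeSet | v ∈ e ∧ C e = c} := ⟨heE, hve, hec⟩
    rw [hset] at hmem
    simpa using hmem
  have hcc : c ≠ c' := fun h => hvc' e₀ he₀E hv0 (hc0.trans h)
  have hnotdef : ∀ z, ¬ DeficientAt G C z → ProperAt G C z := by
    intro z hz f hfE g hgE hzf hzg hfg hCeq
    exact hz ⟨f, hfE, g, hgE, hfg, hzf, hzg, hCeq⟩
  have hdefShape : ∀ z, DeficientAt G C z → Shape G C z := by
    intro z hz
    obtain ⟨d, d', hDz⟩ := hdef z hz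
    obtain ⟨h2z, hnod', hnond⟩ := hDz
    obtain ⟨f₀, f₁, hf01, hfset⟩ := Set.ncard_eq_two.mp h2z
    have hf₀ : f₀ ∈ G.edgeSet ∧ z ∈ f₀ ∧ C f₀ = d := by
      have h : f₀ ∈ {e ∈ G.edgeSet | z ∈ e ∧ C e = d} := by rw [hfset]; simp
      exact ⟨h.1, h.2⟩
    have hkey : ∀ e ∈ G.edgeSet, z ∈ e → C e = d → e = f₀ ∨ e = f₁ := by
      intro e heE hze hec
      have hmem : e ∈ {e ∈ G.edgeSet | z ∈ e ∧ C e = d} := ⟨heE, hze, hec⟩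
      rw [hfset] at hmem
      simpa using hmem
    refine ⟨d, d', ?_, hnod', hnond, ?_⟩
    · intro h
      exact hnod' f₀ hf₀.1 hf₀.2.1 (hf₀.2.2.trans h)
    · intro f hfE g hgE h hhE hzf hzg hzh hfg hfh hgh hcs
      obtain ⟨hdf, hdg, hdh⟩ := hcs
      rcases hkey f hfE hzf hdf with h1 | h1 <;> rcases hkey g hgE hzg hdg with h2 | h2 <;>
        rcases hkey h hhE hzh hdh with h3 | h3
      · exact hfg (h1.trans h2.symm)
      · exact hfg (h1.trans h2.symm)
      · exact hfh (h1.trans h3.symm)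
      · exact hgh (h2.trans h3.symm)
      · exact hgh (h2.trans h3.symm)
      · exact hfh (h1.trans h3.symm)
      · exact hfg (h1.trans h2.symm)
      · exact hfg (h1.trans h2.symm)
  have hthird : ∀ u' z : V, u' ≠ v → DeficientAt G C u' → z ≠ v → z ≠ u' →
      ¬ DeficientAt G C z := by
    intro u' z hu'v hu'def hzv hzu' hzdef
    have hsub : {v, u', z} ⊆ {x | DeficientAt G C x} := by
      intro a ha
      simp only [Set.mem_insert_iff, Set.mem_singleton_iff] at ha
      rcases ha with rfl | rfl | rfl
      · exact hv
      · exact hu'def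
      · exact hzdef
    have hm1 : v ∉ ({u', z} : Set V) := by
      simp only [Set.mem_insert_iff, Set.mem_singleton_iff]
      push_neg
      exact ⟨Ne.symm hu'v, Ne.symm hzv⟩
    have hm2 : u' ∉ ({z} : Set V) := by
      simpa using Ne.symm hzu'
    have h3 : ({v, u', z} : Set V).ncard = 3 := by
      rw [Set.ncard_insert_of_notMem hm1 (Set.toFinite _),
          Set.ncard_insert_of_notMem hm2 (Set.toFinite _), Set.ncard_singleton]
    have hle := Set.ncard_le_ncard hsub (Set.toFinite _)
    omega
  by_cases hu : ∃ u', u' ≠ v ∧ DeficientAt G C u'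
  · obtain ⟨u, huv, hudef⟩ := hu
    have hother : ∀ z, z ≠ v → z ≠ u → ProperAt G C z := fun z hzv hzu =>
      hnotdef z (hthird u z huv hudef hzv hzu)
    obtain ⟨y₁, w₁, hAW₁, hprop₁, hShape₁, hProper₁⟩ :=
      roundLemma hs C c c' hcc (Ne.symm huv) he₀E he₁E hne01 hv0 hv1 hc0 hc1 hvc hvc' hvd hother
    rcases hShape₁ (hdefShape u hudef) with hSh | hPr
    · obtain ⟨d₂, d₂', hdd₂, hnod₂', hnond₂, hle₂⟩ := hSh
      by_cases hdup : ∃ f g : Sym2 V, f ∈ G.edgeSet ∧ g ∈ G.edgeSet ∧ u ∈ f ∧ u ∈ g ∧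
          f ≠ g ∧ flipOn C c c' {e | e ∈ w₁.edges} f = d₂ ∧
          flipOn C c c' {e | e ∈ w₁.edges} g = d₂
      · obtain ⟨f₀', f₁', hf0E, hf1E, hu0, hu1, hne', hcf0, hcf1⟩ := hdup
        have hvc₂ : ∀ e ∈ G.edgeSet, u ∈ e → flipOn C c c' {e | e ∈ w₁.edges} e = d₂ →
            e = f₀' ∨ e = f₁' := by
          intro e heE hue hec
          by_contra hcon
          push_neg at hcon
          exact hle₂ e heE f₀' hf0E f₁' hf1E hue hu0 hu1 hcon.1 hcon.2 hne' ⟨hec, hcf0, hcf1⟩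
        have hother₂ : ∀ z, z ≠ u → z ≠ v → ProperAt G (flipOn C c c' {e | e ∈ w₁.edges}) z :=
          fun z hzu _ => hprop₁ z hzu
        obtain ⟨y₂, w₂, hAW₂, hprop₂, hShape₂, hProper₂⟩ :=
          roundLemma hs (flipOn C c c' {e | e ∈ w₁.edges}) d₂ d₂' hdd₂ huv
            hf0E hf1E hne' hu0 hu1 hcf0 hcf1 hvc₂ hnod₂' hnond₂ hother₂
        refine ⟨c, c', d₂, d₂', v, y₁, u, y₂, w₁, w₂, hAW₁, hAW₂, ?_⟩
        intro f hfE g hgE hfg hz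
        obtain ⟨z, hzf, hzg⟩ := hz
        by_cases hzv : z = v
        · subst hzv
          exact hProper₂ (hprop₁ z (Ne.symm huv)) f hfE g hgE hzf hzg hfg
        · exact hprop₂ z hzv f hfE g hgE hzf hzg hfg
      · have hPu : ProperAt G (flipOn C c c' {e | e ∈ w₁.edges}) u := by
          intro f hfE g hgE huf hug hfg hCeq
          by_cases hfd : flipOn C c c' {e | e ∈ w₁.edges} f = d₂
          · exact hdup ⟨f, g, hfE, hgE, huf, hug, hfg, hfd, hCeq ▸ hfd⟩
          · exact hnond₂ f hfE g hgE huf hug hfg hfd hCeq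
        refine ⟨c, c', c, c, v, y₁, v, v, w₁, Walk.nil, hAW₁, ⟨by simp, by simp [List.Chain']⟩, ?_⟩
        rw [flipOn_self]
        intro f hfE g hgE hfg hz
        obtain ⟨z, hzf, hzg⟩ := hz
        by_cases hzu : z = u
        · subst hzu
          exact hPu f hfE g hgE hzf hzg hfg
        · exact hprop₁ z hzu f hfE g hgE hzf hzg hfg
    · refine ⟨c, c', c, c, v, y₁, v, v, w₁, Walk.nil, hAW₁, ⟨by simp, by simp [List.Chain']⟩, ?_⟩
      rw [flipOn_self]
      intro f hfE g hgE hfg hz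
      obtain ⟨z, hzf, hzg⟩ := hz
      by_cases hzu : z = u
      · subst hzu
        exact hPr f hfE g hgE hzf hzg hfg
      · exact hprop₁ z hzu f hfE g hgE hzf hzg hfg
  · push_neg at hu
    obtain ⟨x₀, hadj₀, he₀eq⟩ := eq_mk_of_mem he₀E hv0
    have hvx : v ≠ x₀ := hadj₀.ne
    have hother : ∀ z, z ≠ v → z ≠ x₀ → ProperAt G C z := fun z hzv _ => hnotdef z (hu z hzv)
    obtain ⟨y₁, w₁, hAW₁, hprop₁, hShape₁, hProper₁⟩ :=
      roundLemma hs C c c' hcc hvx he₀E he₁E hne01 hv0 hv1 hc0 hc1 hvc hvc' hvd hother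
    have hPu : ProperAt G (flipOn C c c' {e | e ∈ w₁.edges}) x₀ :=
      hProper₁ (hnotdef x₀ (hu x₀ (Ne.symm hvx)))
    refine ⟨c, c', c, c, v, y₁, v, v, w₁, Walk.nil, hAW₁, ⟨by simp, by simp [List.Chain']⟩, ?_⟩
    rw [flipOn_self]
    intro f hfE g hgE hfg hz
    obtain ⟨z, hzf, hzg⟩ := hz
    by_cases hzu : z = x₀
    · subst hzu
      exact hPu f hfE g hgE hzf hzg hfg
    · exact hprop₁ z hzu f hfE g hgE hzf hzg hfg
end

section
/- Let C be an almost edge k-coloring of a k-regular bipartite graph such that vertex v_1 has a (+c−c')-deficiency, vertex v_2 has a (+c'−c)-deficiency, and v_1 and v_2 lie in the same side of the bipartition. Let c'' be a color different from c and c'. Then the longest alternating walk with colors c' and c'' that starts at v_2 with a c''-edge is a cycle (i.e., it returns to v_2). -/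
open SimpleGraph

variable {V : Type*}

private lemma walk_side {G : SimpleGraph V} (s : V → Bool)
    (hs : ∀ u v, G.Adj u v → s u ≠ s v) :
    ∀ {u v : V} (w : G.Walk u v), (s u = s v ↔ Even w.length) := by
  intro u v w
  induction w with
  | nil => simp
  | @cons u u' v h p ih =>
    have h2 := hs _ _ h
    simp only [Walk.length_cons, Nat.even_add_one, ← ih]
    revert h2
    cases hu : s u <;> cases hu' : s u' <;> cases hv : s v <;> simp

private lemma head_mem {G : SimpleGraph V} :
    ∀ {u v : V} (w : G.Walk u v) (h : w.edges ≠ []), u ∈ w.edges.head h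
  | _, _, .nil, h => absurd rfl h
  | _, _, .cons _ _, _ => by simp [Walk.edges_cons]

private lemma last_mem {G : SimpleGraph V} {u v : V} (w : G.Walk u v) (h : w.edges ≠ []) :
    v ∈ w.edges.getLast h := by
  rw [List.getLast_eq_head_reverse]
  have h' : w.reverse.edges ≠ [] := by simpa [Walk.edges_reverse] using h
  have := head_mem w.reverse h'
  simp only [Walk.edges_reverse] at this
  convert this using 2

private lemma alt_last {α β : Type*} :
    ∀ (L : List α) (h : L ≠ []) (f : α → β) (a b : β), a ≠ b →
      (∀ e ∈ L, f e = a ∨ f e = b) →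
      List.Chain' (fun e g => f e ≠ f g) L →
      f (L.head h) = a →
      f (L.getLast h) = if Even L.length then b else a
  | [], h, _, _, _, _, _, _, _ => absurd rfl h
  | [x], _, f, a, b, hab, hmem, hch, hhead => by simp_all
  | x :: y :: t, _, f, a, b, hab, hmem, hch, hhead => by
    have hxy : f x ≠ f y := (List.isChain_cons_cons.mp hch).1
    have hfx : f x = a := hhead
    have hy : f y = b := by
      rcases hmem y (by simp) with h | h
      · exact absurd (h.trans hfx.symm) (Ne.symm hxy)
      · exact h
    have ih := alt_last (y :: t) (by simp) f b a hab.symm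
      (fun e he => (hmem e (List.mem_cons_of_mem _ he)).symm)
      (List.isChain_cons_cons.mp hch).2 hy
    rw [List.getLast_cons (by simp)]
    rw [ih]
    simp only [List.length_cons, Nat.even_add_one]
    rcases Nat.even_or_odd t.length with he | ho
    · simp [he]
    · have : ¬ Even t.length := Nat.not_even_iff_odd.mpr ho
      simp [this]


private lemma exists_unique_color [Fintype V] [DecidableEq V] {k : ℕ} {G : SimpleGraph V}
    [DecidableRel G.Adj] {C : Sym2 V → Fin k} {x : V} (hdeg : G.degree x = k)
    (hnd : ¬ DeficientAt G C x) (d : Fin k) :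
    ∃ e, (e ∈ G.edgeSet ∧ x ∈ e ∧ C e = d) ∧
      ∀ e', e' ∈ G.edgeSet → x ∈ e' → C e' = d → e' = e := by
  have hmem : ∀ e, e ∈ G.incidenceFinset x ↔ e ∈ G.edgeSet ∧ x ∈ e := by
    intro e
    rw [mem_incidenceFinset]
    rfl
  have hinj : ∀ e₁ ∈ G.incidenceFinset x, ∀ e₂ ∈ G.incidenceFinset x,
      C e₁ = C e₂ → e₁ = e₂ := by
    intro e₁ h1 e₂ h2 hC
    by_contra hne
    rw [hmem] at h1 h2
    exact hnd ⟨e₁, h1.1, e₂, h2.1, hne, h1.2, h2.2, hC⟩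
  have hcard : ((G.incidenceFinset x).image C).card = Fintype.card (Fin k) := by
    rw [Finset.card_image_of_injOn (fun a ha b hb => hinj a ha b hb),
      card_incidenceFinset_eq_degree, hdeg, Fintype.card_fin]
  have hsurj : d ∈ (G.incidenceFinset x).image C := by
    rw [Finset.eq_univ_of_card _ hcard]
    exact Finset.mem_univ d
  obtain ⟨e, he, hCe⟩ := Finset.mem_image.mp hsurj
  refine ⟨e, ⟨(hmem e).mp he |>.1, (hmem e).mp he |>.2, hCe⟩, ?_⟩
  intro e' hE hx hC
  exact hinj e' ((hmem e').mpr ⟨hE, hx⟩) e he (hC.trans hCe.symm)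

/-- In an almost edge `k`-coloring of a `k`-regular bipartite graph where `v₁`
is `(+c−c')`-deficient, `v₂` is `(+c'−c)`-deficient, both in the same side of the
bipartition, and `c''∉{c,c'}`, the longest (maximal, edge-non-repeating) alternating walk
with colors `c'` and `c''` starting at `v₂` with a `c''`-edge is a cycle: it ends at `v₂`. -/
theorem stmt5 [Fintype V] {k : ℕ} (G : SimpleGraph V) [DecidableRel G.Adj]
    (hreg : ∀ v, G.degree v = k)
    (s : V → Bool) (hs : ∀ u v, G.Adj u v → s u ≠ s v)
    (C : Sym2 V → Fin k) (c c' c'' : Fin k) (v₁ v₂ : V)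
    (hd1 : HasDeficiency G C v₁ c c') (hd2 : HasDeficiency G C v₂ c' c)
    (hothers : ∀ w, DeficientAt G C w → w = v₁ ∨ w = v₂)
    (hside : s v₁ = s v₂) (h1 : c'' ≠ c) (h2 : c'' ≠ c') :
    ∀ (x : V) (w : G.Walk v₂ x), w.IsTrail → IsAltWalk G C c' c'' w →
      (∀ h : w.edges ≠ [], C (w.edges.head h) = c'') →
      ¬ ExtendableAtEnd G C c' c'' w → w.edges ≠ [] → x = v₂ := by
  classical
  intro x w htrail halt hhead hnext hne
  by_contra hxne
  have hlastL : w.edges.getLast hne ∈ w.edges := List.getLast_mem hne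
  have hlastE : w.edges.getLast hne ∈ G.edgeSet := w.edges_subset_edgeSet hlastL
  have hxlast : x ∈ w.edges.getLast hne := last_mem w hne
  have hlen : w.edges.length = w.length := w.length_edges
  have hparity := alt_last w.edges hne C c'' c' h2
    (fun e he => (halt.1 e he).symm) halt.2 (hhead hne)
  by_cases hxv1 : x = v₁
  · -- x = v₁ : same side as v₂, so even length, so last edge has color c', impossible at v₁
    have heven : Even w.length := by
      rw [← walk_side s hs w]
      rw [hxv1, ← hside]
    rw [hlen, if_pos heven] at hparity
    subst hxv1
    exact hd1.2.1 _ hlastE hxlast hparity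
  · -- x is not deficient, so each color appears exactly once at x
    have hnd : ¬ DeficientAt G C x := fun hdef => by
      rcases hothers x hdef with h | h
      · exact hxv1 h
      · exact hxne h
    -- the color of the last edge, and the opposite color
    set dlast := C (w.edges.getLast hne) with hdlast
    have hdl : dlast = c' ∨ dlast = c'' := halt.1 _ hlastL
    set d' : Fin k := if dlast = c' then c'' else c' with hd'
    have hd'mem : d' = c' ∨ d' = c'' := by
      rw [hd']; split <;> simp
    have hd'ne : d' ≠ dlast := by
      rcases hdl with h | h <;> rw [hd', h] <;> simp [h2, Ne.symm h2]
    obtain ⟨f, ⟨hfE, hfx, hfc⟩, hfuniq⟩ :=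
      exists_unique_color (hreg x) hnd d'
    -- count of walk edges at x is odd
    have hodd : ¬ Even (w.edges.countP fun e => x ∈ e) := by
      rw [htrail.even_countP_edges_iff x]
      push_neg
      exact ⟨fun h => absurd h.symm hxne, fun _ => rfl⟩
    -- each color in {c', c''} has a unique edge at x
    obtain ⟨g₁, ⟨hg1E, hg1x, hg1c⟩, hg1u⟩ := exists_unique_color (hreg x) hnd c'
    obtain ⟨g₂, ⟨hg2E, hg2x, hg2c⟩, hg2u⟩ := exists_unique_color (hreg x) hnd c''
    -- so at most two walk edges contain x
    have hsub : ∀ e ∈ w.edges.filter (fun e => decide (x ∈ e)), e = g₁ ∨ e = g₂ := by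
      intro e he
      rw [List.mem_filter, decide_eq_true_eq] at he
      have heE := w.edges_subset_edgeSet he.1
      rcases halt.1 e he.1 with h | h
      · exact Or.inl (hg1u e heE he.2 h)
      · exact Or.inr (hg2u e heE he.2 h)
    have hle2 : (w.edges.filter (fun e => decide (x ∈ e))).length ≤ 2 := by
      have hnd' : (w.edges.filter (fun e => decide (x ∈ e))).Nodup :=
        htrail.edges_nodup.filter _
      calc (w.edges.filter (fun e => decide (x ∈ e))).length
          = (w.edges.filter (fun e => decide (x ∈ e))).toFinset.card :=
            (List.toFinset_card_of_nodup hnd').symm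
        _ ≤ ({g₁, g₂} : Finset (Sym2 V)).card := by
            apply Finset.card_le_card
            intro e he
            rw [List.mem_toFinset] at he
            rcases hsub e he with h | h <;> simp [h]
        _ ≤ 2 := Finset.card_le_two
    have hcount1 : (w.edges.filter (fun e => decide (x ∈ e))).length = 1 := by
      rw [List.countP_eq_length_filter] at hodd
      rw [Nat.even_iff] at hodd
      omega
    obtain ⟨a, ha⟩ := List.length_eq_one_iff.mp hcount1
    have hlast_filter : w.edges.getLast hne ∈ w.edges.filter (fun e => decide (x ∈ e)) := by
      rw [List.mem_filter, decide_eq_true_eq]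
      exact ⟨hlastL, hxlast⟩
    have hlast_eq_a : w.edges.getLast hne = a := by
      rw [ha] at hlast_filter
      simpa using hlast_filter
    -- f is not on the walk
    have hfnot : f ∉ w.edges := by
      intro hfL
      have : f ∈ w.edges.filter (fun e => decide (x ∈ e)) := by
        rw [List.mem_filter, decide_eq_true_eq]
        exact ⟨hfL, hfx⟩
      rw [ha] at this
      have : f = a := by simpa using this
      exact hd'ne (by rw [← hfc, this, ← hlast_eq_a])
    -- build an extension, contradiction
    obtain ⟨y, hy⟩ := Sym2.mem_iff_exists.mp hfx
    refine hnext ⟨y, ?_, ?_, ?_, ?_⟩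
    · exact G.mem_edgeSet.mp (hy ▸ hfE)
    · rw [← hy, hfc]; exact hd'mem
    · rw [← hy]; exact hfnot
    · intro h
      rw [← hy, hfc]
      exact hd'ne
end

section
/- Let C be a proper edge coloring of a bipartite graph G, let c and c' be two colors, and let P be the vertex-disjoint union of (one or two) maximal alternating paths with colors c and c'. The map obtained from C by swapping colors c and c' on all edges of P is again a proper edge coloring of G. -/
open SimpleGraph

variable {V : Type*}

lemma mem_head_edges {G : SimpleGraph V} {a b : V} (w : G.Walk a b) (h : w.edges ≠ []) :
    a ∈ w.edges.head h := by
  cases w with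
  | nil => simp at h
  | cons h' p => simp

lemma mem_getLast_edges {G : SimpleGraph V} {a b : V} (w : G.Walk a b) (h : w.edges ≠ []) :
    b ∈ w.edges.getLast h := by
  have h' : w.reverse.edges ≠ [] := by simpa [Walk.edges_reverse] using h
  have := mem_head_edges w.reverse h'
  simp only [Walk.edges_reverse] at this
  rwa [List.head_reverse] at this

lemma eq_of_edges_nil {G : SimpleGraph V} {a b : V} (w : G.Walk a b) (h : w.edges = []) :
    a = b := by
  cases w with
  | nil => rfl
  | cons h' p => simp at h

lemma mem_support_of_mem_edges {G : SimpleGraph V} {a b x : V} {e : Sym2 V} (w : G.Walk a b)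
    (he : e ∈ w.edges) (hx : x ∈ e) : x ∈ w.support := by
  induction e with
  | h y z =>
    rcases Sym2.mem_iff.1 hx with rfl | rfl
    · exact w.fst_mem_support_of_mem_edges he
    · exact w.snd_mem_support_of_mem_edges he

lemma key {k : ℕ} {G : SimpleGraph V} {C : Sym2 V → Fin k} (hC : IsProperEdgeColoring G C)
    {c c' : Fin k} {u v : V} {w : G.Walk u v}
    (hm : IsMaximalAltWalk G C c c' w) (hcc' : c ≠ c')
    {x : V} {e : Sym2 V} (he : e ∈ G.edgeSet) (hx : x ∈ w.support) (hxe : x ∈ e)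
    (henotin : e ∉ w.edges) (hec : C e = c ∨ C e = c') : False := by
  classical
  -- get the other endpoint of e
  obtain ⟨x', rfl⟩ : ∃ x', e = s(x, x') := by
    induction e with
    | h y z =>
      rcases Sym2.mem_iff.1 hxe with rfl | rfl
      · exact ⟨z, rfl⟩
      · exact ⟨y, Sym2.eq_swap⟩
  have hadj : G.Adj x x' := he
  by_cases hxv : x = v
  · subst hxv
    exact hm.2.1 ⟨x', hadj, hec, henotin, fun h hcl => by
      refine hC _ he _ (w.edges_subset_edgeSet (List.getLast_mem h)) ?_ ⟨x, hxe, mem_getLast_edges w h⟩ hcl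
      intro hh; exact henotin (hh ▸ List.getLast_mem h)⟩
  by_cases hxu : x = u
  · subst hxu
    refine hm.2.2 ⟨x', hadj, hec, ?_, ?_⟩
    · rwa [Walk.edges_reverse, List.mem_reverse]
    · intro h hcl
      have h' : w.edges ≠ [] := by simpa [Walk.edges_reverse] using h
      have hgl : w.reverse.edges.getLast h = w.edges.head h' := by
        simp only [Walk.edges_reverse]
        exact List.getLast_reverse _
      rw [hgl] at hcl
      refine hC _ he _ (w.edges_subset_edgeSet (List.head_mem h')) ?_
        ⟨x, hxe, mem_head_edges w h'⟩ hcl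
      intro hh; exact henotin (hh ▸ List.head_mem h')
  · -- x interior
    set w₁ := w.takeUntil x hx with hw₁
    set w₂ := w.dropUntil x hx with hw₂
    have hsplit : w₁.append w₂ = w := w.take_spec hx
    have hed : w.edges = w₁.edges ++ w₂.edges := by
      rw [← hsplit, Walk.edges_append]
    have h₁ : w₁.edges ≠ [] := fun hh => hxu (eq_of_edges_nil w₁ hh).symm
    have h₂ : w₂.edges ≠ [] := fun hh => hxv (eq_of_edges_nil w₂ hh)
    set f := w₁.edges.getLast h₁ with hf
    set g := w₂.edges.head h₂ with hg
    have hxf : x ∈ f := mem_getLast_edges w₁ h₁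
    have hxg : x ∈ g := mem_head_edges w₂ h₂
    have hfw : f ∈ w.edges := hed ▸ List.mem_append_left _ (List.getLast_mem h₁)
    have hgw : g ∈ w.edges := hed ▸ List.mem_append_right _ (List.head_mem h₂)
    have hfg : C f ≠ C g := by
      have hch := hm.1.2
      rw [hed] at hch; replace hch := List.isChain_append.1 hch
      exact hch.2.2 f (by rw [List.getLast?_eq_getLast h₁]; rfl) g (by rw [List.head?_eq_head h₂]; rfl)
    have hef : C s(x, x') ≠ C f :=
      hC _ he _ (w.edges_subset_edgeSet hfw) (fun hh => henotin (hh ▸ hfw)) ⟨x, hxe, hxf⟩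
    have heg : C s(x, x') ≠ C g :=
      hC _ he _ (w.edges_subset_edgeSet hgw) (fun hh => henotin (hh ▸ hgw)) ⟨x, hxe, hxg⟩
    rcases hm.1.1 f hfw with hfc | hfc <;> rcases hm.1.1 g hgw with hgc | hgc <;>
      rcases hec with hh | hh <;> simp_all

/-- Swapping the colors `c` and `c'` on the edges of one or two vertex-disjoint
maximal alternating paths of a properly edge-colored bipartite graph yields again a proper
edge coloring. -/
theorem stmt13 {k : ℕ} (G : SimpleGraph V) (hbip : _root_.IsBipartite G)
    (C : Sym2 V → Fin k) (hC : IsProperEdgeColoring G C) (c c' : Fin k)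
    (ps : List ((u : V) × (v : V) × G.Walk u v))
    (h1 : 1 ≤ ps.length) (h2 : ps.length ≤ 2)
    (hpath : ∀ p ∈ ps, p.2.2.IsPath)
    (hmax : ∀ p ∈ ps, IsMaximalAltWalk G C c c' p.2.2)
    (hdisj : ps.Pairwise fun p q => ∀ x ∈ p.2.2.support, x ∉ q.2.2.support) :
    IsProperEdgeColoring G (flipOn C c c' {e | ∃ p ∈ ps, e ∈ p.2.2.edges}) := by
  classical
  set S : Set (Sym2 V) := {e | ∃ p ∈ ps, e ∈ p.2.2.edges} with hS
  intro e₁ he₁ e₂ he₂ hne hv heq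
  obtain ⟨v, hv₁, hv₂⟩ := hv
  have hCne : C e₁ ≠ C e₂ := hC e₁ he₁ e₂ he₂ hne ⟨v, hv₁, hv₂⟩
  by_cases hcc' : c = c'
  · subst hcc'
    simp only [flipOn, Equiv.swap_self, Equiv.refl_apply] at heq
    split_ifs at heq <;> exact hCne heq
  -- mixed-case helper
  have mixed : ∀ e f : Sym2 V, e ∈ G.edgeSet → f ∈ G.edgeSet → e ≠ f → v ∈ e → v ∈ f →
      e ∈ S → f ∉ S → Equiv.swap c c' (C e) = C f → False := by
    intro e f hee hfe hef hve hvf heS hfS hswap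
    obtain ⟨p, hp, hep⟩ := heS
    have hmp := hmax p hp
    have hce : C e = c ∨ C e = c' := hmp.1.1 e hep
    have hcf : C f = c ∨ C f = c' := by
      rcases hce with h | h <;> rw [← hswap, h] <;> simp [Equiv.swap_apply_left, Equiv.swap_apply_right]
    have hfnotin : f ∉ p.2.2.edges := fun hh => hfS ⟨p, hp, hh⟩
    have hvs : v ∈ p.2.2.support := mem_support_of_mem_edges _ hep hve
    exact key hC hmp hcc' hfe hvs hvf hfnotin hcf
  unfold flipOn at heq
  by_cases h₁ : e₁ ∈ S <;> by_cases h₂ : e₂ ∈ S <;> simp only [h₁, h₂, if_pos, if_neg,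
    not_false_iff, if_true, if_false] at heq
  · exact hCne ((Equiv.swap c c').injective heq)
  · exact mixed e₁ e₂ he₁ he₂ hne hv₁ hv₂ h₁ h₂ heq
  · exact mixed e₂ e₁ he₂ he₁ hne.symm hv₂ hv₁ h₂ h₁ heq.symm
  · exact hCne heq
end

section
/- Let G be a bipartite graph, C a map E → {c_1,...,c_k} in which a vertex v_s has a (+c'−c)-deficiency for colors c, c', all other vertices being non-deficient, and suppose there is a color c'' such that no edge of color c'' is incident to v_s. Then the maximal alternating walk with colors c' and c'' starting at v_s does not return to v_s; i.e., it is a path, and flipping colors c' and c'' along it eliminates the deficiency of v_s without creating new deficiencies. -/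
open SimpleGraph

variable {V : Type*}

section Helpers
variable {V : Type*} {k : ℕ} {G : SimpleGraph V} {C : Sym2 V → Fin k}

lemma bip_parity {s : V → Bool} (hs : ∀ u v, G.Adj u v → s u ≠ s v) {u v : V}
    (w : G.Walk u v) : s u = s v ↔ Even w.length := by
  induction w with
  | nil => simp
  | cons h p ih =>
    rename_i u' v' w'
    have h1 := hs _ _ h
    rw [SimpleGraph.Walk.length_cons, Nat.even_add_one, ← ih]
    revert h1
    cases hsu : s u' <;> cases hsv : s v' <;> cases hsw : s w' <;> simp

lemma alt_parity {c' c'' : Fin k} (l : List (Sym2 V)) :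
    (∀ e ∈ l, C e = c' ∨ C e = c'') →
    List.Chain' (fun e f => C e ≠ C f) l → ∀ h : l ≠ [],
    (C (l.getLast h) = C (l.head h) ↔ Odd l.length) := by
  induction l with
  | nil => intro _ _ h; exact absurd rfl h
  | cons a t ih =>
    intro hmem hch h
    cases t with
    | nil => simp
    | cons b t' =>
      have ih' := ih (fun e he => hmem e (List.mem_cons_of_mem _ he)) hch.tail (by simp)
      have hab : C a ≠ C b := (List.isChain_cons_cons.mp hch).1
      have hga := hmem a (by simp)
      have hgb := hmem b (by simp)
      have hgL := hmem ((b :: t').getLast (by simp))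
        (List.mem_cons_of_mem _ (List.getLast_mem (by simp)))
      rw [List.getLast_cons (by simp : (b :: t') ≠ [])]
      have hhd : (a :: b :: t').head h = a := rfl
      have hhd2 : (b :: t').head (by simp) = b := rfl
      rw [hhd]
      rw [hhd2] at ih'
      have hlen : (a :: b :: t').length = (b :: t').length + 1 := rfl
      rw [hlen, Nat.odd_add_one, ← ih']
      constructor
      · intro h' h''; rw [h'] at h''; exact hab h''
      · intro h'
        rcases hga with hA | hA <;> rcases hgb with hB | hB <;> rcases hgL with hL | hL <;>
          simp_all

lemma firstEdgeMem {u v : V} (w : G.Walk u v) (h : w.edges ≠ []) : u ∈ w.edges.head h := by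
  cases w with
  | nil => simp at h
  | cons hadj p => simp [SimpleGraph.Walk.edges_cons]

lemma lastEdgeMem {u v : V} (w : G.Walk u v) (h : w.edges ≠ []) : v ∈ w.edges.getLast h := by
  have h' : w.reverse.edges ≠ [] := by simp [SimpleGraph.Walk.edges_reverse, h]
  have h2 := firstEdgeMem w.reverse h'
  have h3 : w.reverse.edges.head h' = w.edges.getLast h := by
    simp [SimpleGraph.Walk.edges_reverse, List.head_reverse]
  rwa [h3] at h2

lemma pathHeadEdge {u v : V} (w : G.Walk u v) (hw : w.IsPath) (e : Sym2 V)
    (he : e ∈ w.edges) (hu : u ∈ e) :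
    e = w.edges.head (by intro h0; rw [h0] at he; exact List.not_mem_nil he) := by
  induction w with
  | nil => simp at he
  | cons hadj p ih =>
    rename_i u' v' w'
    have hh : (SimpleGraph.Walk.cons hadj p).edges.head
        (by intro h0; rw [h0] at he; exact List.not_mem_nil he) = s(u', v') := by
      simp [SimpleGraph.Walk.edges_cons]
    rw [hh]
    rw [SimpleGraph.Walk.edges_cons] at he
    rcases List.mem_cons.mp he with rfl | hmem
    · rfl
    · exfalso
      obtain ⟨z, rfl⟩ := Sym2.mem_iff_exists.mp hu
      exact ((SimpleGraph.Walk.cons_isPath_iff _ _).mp hw).2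
        (p.fst_mem_support_of_mem_edges hmem)

lemma pathLastEdge {u v : V} (w : G.Walk u v) (hw : w.IsPath) (e : Sym2 V)
    (he : e ∈ w.edges) (hv : v ∈ e) :
    e = w.edges.getLast (by intro h0; rw [h0] at he; exact List.not_mem_nil he) := by
  have hrev : e ∈ w.reverse.edges := by simp [SimpleGraph.Walk.edges_reverse, he]
  have h2 := pathHeadEdge w.reverse hw.reverse e hrev hv
  have h3 : w.reverse.edges.head
      (by intro h0; rw [h0] at hrev; exact List.not_mem_nil hrev) =
      w.edges.getLast (by intro h0; rw [h0] at he; exact List.not_mem_nil he) := by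
    simp [SimpleGraph.Walk.edges_reverse, List.head_reverse]
  rwa [h3] at h2

lemma internal_edges [DecidableEq V] {u v y : V} (w : G.Walk u v)
    (hch : List.Chain' (fun e f => C e ≠ C f) w.edges)
    (hy : y ∈ w.support) (hyu : y ≠ u) (hyv : y ≠ v) :
    ∃ f g, f ∈ w.edges ∧ g ∈ w.edges ∧ y ∈ f ∧ y ∈ g ∧ C f ≠ C g := by
  have hspec := w.take_spec hy
  have hedges : (w.takeUntil y hy).edges ++ (w.dropUntil y hy).edges = w.edges := by
    rw [← SimpleGraph.Walk.edges_append, hspec]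
  have hq : (w.takeUntil y hy).edges ≠ [] := by
    intro h0
    apply hyu
    have hl : (w.takeUntil y hy).length = 0 := by
      rw [← SimpleGraph.Walk.length_edges, h0]; rfl
    exact (SimpleGraph.Walk.eq_of_length_eq_zero hl).symm
  have hr : (w.dropUntil y hy).edges ≠ [] := by
    intro h0
    apply hyv
    have hl : (w.dropUntil y hy).length = 0 := by
      rw [← SimpleGraph.Walk.length_edges, h0]; rfl
    exact SimpleGraph.Walk.eq_of_length_eq_zero hl
  refine ⟨(w.takeUntil y hy).edges.getLast hq, (w.dropUntil y hy).edges.head hr, ?_, ?_, ?_, ?_, ?_⟩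
  · rw [← hedges]; exact List.mem_append_left _ (List.getLast_mem hq)
  · rw [← hedges]; exact List.mem_append_right _ (List.head_mem hr)
  · exact lastEdgeMem _ hq
  · exact firstEdgeMem _ hr
  · rw [← hedges] at hch
    have h3 := (List.isChain_append.mp hch).2.2
    apply h3
    · rw [List.getLast?_eq_getLast hq]; rfl
    · rw [List.head?_eq_head hr]; rfl

end Helpers

/-- If `v_s` has a `(+c'−c)`-deficiency, all other vertices are non-deficient,
and no `c''`-edge is incident to `v_s`, then (a) a maximal alternating walk with colors `c'`
and `c''` starting at `v_s` with a `c'`-edge never returns to `v_s`, and (b) there is such a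
maximal alternating path, and swapping `c'` and `c''` along it eliminates the deficiency of
`v_s` without creating new deficiencies, i.e., yields a proper edge coloring. -/
theorem stmt17 [Fintype V] {k : ℕ} (G : SimpleGraph V) (hbip : _root_.IsBipartite G)
    (C : Sym2 V → Fin k) (v_s : V) (c c' c'' : Fin k)
    (hdef : HasDeficiency G C v_s c' c)
    (hothers : ∀ w, DeficientAt G C w → w = v_s)
    (hc'' : ∀ f ∈ G.edgeSet, v_s ∈ f → C f ≠ c'')
    (h1 : c'' ≠ c') (h2 : c'' ≠ c) :
    (∀ (x : V) (w : G.Walk v_s x), IsAltWalk G C c' c'' w →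
        (∀ h : w.edges ≠ [], C (w.edges.head h) = c') → v_s ∉ w.support.tail) ∧
    (∃ (x : V) (w : G.Walk v_s x), IsMaximalAltWalk G C c' c'' w ∧ w.IsPath ∧
        w.edges ≠ [] ∧ (∀ h : w.edges ≠ [], C (w.edges.head h) = c') ∧
        IsProperEdgeColoring G (flipOn C c' c'' {e | e ∈ w.edges})) := by
  classical
  obtain ⟨s, hs⟩ := hbip
  -- Part (a)
  have parta : ∀ (x : V) (w : G.Walk v_s x), IsAltWalk G C c' c'' w →
      (∀ h : w.edges ≠ [], C (w.edges.head h) = c') → v_s ∉ w.support.tail := by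
    intro x w halt hhead hmem
    cases w with
    | nil => simp at hmem
    | cons hadj p =>
      rename_i b
      rw [SimpleGraph.Walk.support_cons, List.tail_cons] at hmem
      have hpre : (Walk.cons hadj (p.takeUntil v_s hmem)).edges <+:
          (Walk.cons hadj p).edges := by
        refine ⟨(p.dropUntil v_s hmem).edges, ?_⟩
        rw [SimpleGraph.Walk.edges_cons, SimpleGraph.Walk.edges_cons, List.cons_append,
          ← SimpleGraph.Walk.edges_append, p.take_spec hmem]
      have halt0 : IsAltWalk G C c' c'' (Walk.cons hadj (p.takeUntil v_s hmem)) :=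
        ⟨fun e he => halt.1 e (hpre.subset he), halt.2.prefix hpre⟩
      have h0 : (Walk.cons hadj (p.takeUntil v_s hmem)).edges ≠ [] := by
        simp [SimpleGraph.Walk.edges_cons]
      have h0' : (Walk.cons hadj p).edges ≠ [] := by simp [SimpleGraph.Walk.edges_cons]
      have hhead0 : C ((Walk.cons hadj (p.takeUntil v_s hmem)).edges.head h0) = c' := by
        have hh := hhead h0'
        have e1 : (Walk.cons hadj (p.takeUntil v_s hmem)).edges.head h0 = s(v_s, b) := by
          simp [SimpleGraph.Walk.edges_cons]
        have e2 : (Walk.cons hadj p).edges.head h0' = s(v_s, b) := by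
          simp [SimpleGraph.Walk.edges_cons]
        rw [e1]; rw [e2] at hh; exact hh
      have heven : Even (Walk.cons hadj (p.takeUntil v_s hmem)).length :=
        (bip_parity hs _).mp rfl
      have hparity := alt_parity (C := C) (Walk.cons hadj (p.takeUntil v_s hmem)).edges
        halt0.1 halt0.2 h0
      have hnotodd : ¬ Odd (Walk.cons hadj (p.takeUntil v_s hmem)).edges.length := by
        rw [SimpleGraph.Walk.length_edges, Nat.not_odd_iff_even]; exact heven
      have hlast' : C ((Walk.cons hadj (p.takeUntil v_s hmem)).edges.getLast h0) ≠ c' := by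
        rw [← hhead0]; intro hcon; exact hnotodd (hparity.mp hcon)
      have hlastc : C ((Walk.cons hadj (p.takeUntil v_s hmem)).edges.getLast h0) = c'' :=
        (halt0.1 _ (List.getLast_mem h0)).resolve_left hlast'
      exact hc'' _ ((Walk.cons hadj (p.takeUntil v_s hmem)).edges_subset_edgeSet
        (List.getLast_mem h0)) (lastEdgeMem _ h0) hlastc
  refine ⟨parta, ?_⟩
  -- Part (b)
  have hnd : ∀ y, y ≠ v_s → ∀ e₁, e₁ ∈ G.edgeSet → ∀ e₂, e₂ ∈ G.edgeSet → e₁ ≠ e₂ →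
      y ∈ e₁ → y ∈ e₂ → C e₁ ≠ C e₂ :=
    fun y hy e₁ h₁ e₂ h₂ hne hm₁ hm₂ hCeq =>
      hy (hothers y ⟨e₁, h₁, e₂, h₂, hne, hm₁, hm₂, hCeq⟩)
  set P : ℕ → Prop := fun n => ∃ (x : V) (w : G.Walk v_s x), w.IsPath ∧
      IsAltWalk G C c' c'' w ∧ w.edges ≠ [] ∧
      (∀ h : w.edges ≠ [], C (w.edges.head h) = c') ∧ w.length = n with hPdef
  have hP1 : P 1 := by
    obtain ⟨a, b, hab, hS⟩ := Set.ncard_eq_two.mp hdef.1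
    have haS : a ∈ {e ∈ G.edgeSet | v_s ∈ e ∧ C e = c'} := by
      rw [hS]; exact Set.mem_insert _ _
    obtain ⟨haE, haV, haC⟩ := haS
    obtain ⟨z, rfl⟩ := Sym2.mem_iff_exists.mp haV
    have hadj : G.Adj v_s z := G.mem_edgeSet.mp haE
    refine ⟨z, Walk.cons hadj Walk.nil, ?_, ?_, ?_, ?_, rfl⟩
    · rw [SimpleGraph.Walk.cons_isPath_iff]
      exact ⟨SimpleGraph.Walk.IsPath.nil, by simp [hadj.ne]⟩
    · constructor
      · intro e he
        simp only [SimpleGraph.Walk.edges_cons, SimpleGraph.Walk.edges_nil,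
          List.mem_singleton] at he
        subst he; exact Or.inl haC
      · exact List.isChain_singleton _
    · simp [SimpleGraph.Walk.edges_cons]
    · intro h'; simpa [SimpleGraph.Walk.edges_cons] using haC
  have hcard : 1 ≤ Fintype.card V := Fintype.card_pos_iff.mpr ⟨v_s⟩
  have hPn : P (Nat.findGreatest P (Fintype.card V)) := Nat.findGreatest_spec hcard hP1
  have hmaxlen : ∀ m, P m → m ≤ Nat.findGreatest P (Fintype.card V) := by
    intro m hm
    obtain ⟨x', w', hp', -, -, -, hl'⟩ := id hm
    exact Nat.le_findGreatest (by rw [← hl']; exact le_of_lt hp'.length_lt) hm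
  obtain ⟨x, w, hpath, halt, hne, hhead, hlen⟩ := hPn
  -- not extendable at the end
  have hext : ¬ ExtendableAtEnd G C c' c'' w := by
    rintro ⟨z, hadj, hcol, hfresh, hlast⟩
    have hWedges : (w.concat hadj).edges = w.edges ++ [s(x, z)] := by
      rw [SimpleGraph.Walk.edges_concat, List.concat_eq_append]
    have halt' : IsAltWalk G C c' c'' (w.concat hadj) := by
      constructor
      · intro e he
        rw [hWedges, List.mem_append] at he
        rcases he with he | he
        · exact halt.1 e he
        · simp only [List.mem_singleton] at he; subst he; exact hcol
      · rw [hWedges]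
        refine List.isChain_append.mpr ⟨halt.2, List.isChain_singleton _, ?_⟩
        intro a' ha' b' hb'
        rw [List.getLast?_eq_getLast hne] at ha'
        simp only [Option.mem_def, Option.some.injEq] at ha'
        simp only [List.head?_cons, Option.mem_def, Option.some.injEq] at hb'
        subst ha'; subst hb'
        exact (hlast hne).symm
    have hne' : (w.concat hadj).edges ≠ [] := by simp [hWedges]
    have hhead' : ∀ h' : (w.concat hadj).edges ≠ [], C ((w.concat hadj).edges.head h') = c' := by
      intro h'
      have hh : (w.concat hadj).edges.head h' = w.edges.head hne := by
        simp [hWedges, List.head_append_of_ne_nil hne]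
      rw [hh]; exact hhead hne
    have hzE : s(x, z) ∈ G.edgeSet := G.mem_edgeSet.mpr hadj
    have hzs : z ∉ w.support := by
      intro hz
      by_cases hzv : z = v_s
      · subst hzv
        rcases hcol with hcc | hcc
        · apply parta z (w.concat hadj) halt' hhead'
          rw [SimpleGraph.Walk.support_concat]
          conv_lhs => rw [w.support_eq_cons]
          simp [List.concat_eq_append]
        · exact hc'' s(x, z) hzE (Sym2.mem_mk_right _ _) hcc
      · have hzx : z ≠ x := fun h' => hadj.ne' (h' ▸ rfl)
        obtain ⟨f, g, hfm, hgm, hyf, hyg, hcfg⟩ := internal_edges w halt.2 hz hzv hzx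
        have hf2 := halt.1 f hfm
        have hg2 := halt.1 g hgm
        have hor : C s(x, z) = C f ∨ C s(x, z) = C g := by
          rcases hcol with h' | h'
          · rcases hf2 with h'' | h''
            · exact Or.inl (h'.trans h''.symm)
            · rcases hg2 with h''' | h'''
              · exact Or.inr (h'.trans h'''.symm)
              · exact absurd (h''.trans h'''.symm) hcfg
          · rcases hf2 with h'' | h''
            · rcases hg2 with h''' | h'''
              · exact absurd (h''.trans h'''.symm) hcfg
              · exact Or.inr (h'.trans h'''.symm)
            · exact Or.inl (h'.trans h''.symm)
        rcases hor with h' | h'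
        · exact hzv (hothers z ⟨s(x, z), hzE, f, w.edges_subset_edgeSet hfm,
            fun heq => hfresh (by rw [heq]; exact hfm), Sym2.mem_mk_right _ _, hyf, h'⟩)
        · exact hzv (hothers z ⟨s(x, z), hzE, g, w.edges_subset_edgeSet hgm,
            fun heq => hfresh (by rw [heq]; exact hgm), Sym2.mem_mk_right _ _, hyg, h'⟩)
    have hpath' : (w.concat hadj).IsPath := by
      rw [SimpleGraph.Walk.isPath_def, SimpleGraph.Walk.support_concat,
        List.nodup_append]
      refine ⟨hpath.support_nodup, List.nodup_singleton _, ?_⟩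
      intro a' ha' b' hb'
      simp only [List.mem_singleton] at hb'
      subst hb'
      exact fun h' => hzs (h' ▸ ha')
    have hP' : P (Nat.findGreatest P (Fintype.card V) + 1) :=
      ⟨z, w.concat hadj, hpath', halt', hne', hhead',
        by rw [SimpleGraph.Walk.length_concat, hlen]⟩
    have := hmaxlen _ hP'
    omega
  -- not extendable at the start
  have hextrev : ¬ ExtendableAtEnd G C c' c'' w.reverse := by
    rintro ⟨z, hadj, hcol, -, hlast⟩
    rcases hcol with hcc | hcc
    · have hrne : w.reverse.edges ≠ [] := by simp [SimpleGraph.Walk.edges_reverse, hne]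
      have hgl : w.reverse.edges.getLast hrne = w.edges.head hne := by
        have h1' : w.reverse.edges.getLast? = w.edges.head? := by
          rw [SimpleGraph.Walk.edges_reverse, List.getLast?_reverse]
        rw [List.getLast?_eq_getLast hrne, List.head?_eq_head hne] at h1'
        exact Option.some_injective _ h1'
      exact hlast hrne (by rw [hgl, hhead hne, hcc])
    · exact hc'' s(v_s, z) (G.mem_edgeSet.mpr hadj) (Sym2.mem_mk_left _ _) hcc
  -- flip facts
  have hflip_in : ∀ e ∈ w.edges, flipOn C c' c'' {e | e ∈ w.edges} e =
      Equiv.swap c' c'' (C e) := by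
    intro e he; simp [flipOn, Set.mem_setOf_eq, he]
  have hflip_out : ∀ e ∉ w.edges, flipOn C c' c'' {e | e ∈ w.edges} e = C e := by
    intro e he; simp [flipOn, Set.mem_setOf_eq, he]
  -- properness
  have hproper : IsProperEdgeColoring G (flipOn C c' c'' {e | e ∈ w.edges}) := by
    rintro e₁ he₁ e₂ he₂ hne12 ⟨y, hy1, hy2⟩ heq
    by_cases hyv : y = v_s
    · rw [hyv] at hy1 hy2
      by_cases m₁ : e₁ ∈ w.edges <;> by_cases m₂ : e₂ ∈ w.edges
      · have h₁ := pathHeadEdge w hpath e₁ m₁ hy1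
        have h₂ := pathHeadEdge w hpath e₂ m₂ hy2
        exact hne12 (h₁.trans h₂.symm)
      · have h₁ := pathHeadEdge w hpath e₁ m₁ hy1
        rw [hflip_in e₁ m₁, hflip_out e₂ m₂] at heq
        have hc1 : C e₁ = c' := by rw [h₁]; exact hhead hne
        rw [hc1, Equiv.swap_apply_left] at heq
        exact hc'' e₂ he₂ hy2 heq.symm
      · have h₂ := pathHeadEdge w hpath e₂ m₂ hy2
        rw [hflip_out e₁ m₁, hflip_in e₂ m₂] at heq
        have hc2 : C e₂ = c' := by rw [h₂]; exact hhead hne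
        rw [hc2, Equiv.swap_apply_left] at heq
        exact hc'' e₁ he₁ hy1 heq
      · rw [hflip_out e₁ m₁, hflip_out e₂ m₂] at heq
        by_cases hC1 : C e₁ = c'
        · obtain ⟨a, b, hab, hS⟩ := Set.ncard_eq_two.mp hdef.1
          have hin : ∀ f, f ∈ G.edgeSet → v_s ∈ f → C f = c' → f = a ∨ f = b := by
            intro f hf1 hf2 hf3
            have hf : f ∈ {e ∈ G.edgeSet | v_s ∈ e ∧ C e = c'} := ⟨hf1, hf2, hf3⟩
            rw [hS] at hf; simpa using hf
          have hh := hin (w.edges.head hne) (w.edges_subset_edgeSet (List.head_mem hne))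
            (firstEdgeMem w hne) (hhead hne)
          have h1' := hin e₁ he₁ hy1 hC1
          have h2' := hin e₂ he₂ hy2 (heq ▸ hC1)
          have hne1h : e₁ ≠ w.edges.head hne := fun h' => m₁ (by rw [h']; exact List.head_mem hne)
          have hne2h : e₂ ≠ w.edges.head hne := fun h' => m₂ (by rw [h']; exact List.head_mem hne)
          rcases h1' with h1' | h1' <;> rcases h2' with h2'' | h2'' <;>
            rcases hh with hh' | hh'
          · exact hne12 (h1'.trans h2''.symm)
          · exact hne12 (h1'.trans h2''.symm)
          · exact hne1h (h1'.trans hh'.symm)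
          · exact hne2h (h2''.trans hh'.symm)
          · exact hne2h (h2''.trans hh'.symm)
          · exact hne1h (h1'.trans hh'.symm)
          · exact hne12 (h1'.trans h2''.symm)
          · exact hne12 (h1'.trans h2''.symm)
        · exact hdef.2.2 e₁ he₁ e₂ he₂ hy1 hy2 hne12 hC1 heq
    · have hCne : C e₁ ≠ C e₂ := hnd y hyv e₁ he₁ e₂ he₂ hne12 hy1 hy2
      have key : ∀ f g : Sym2 V, f ∈ G.edgeSet → g ∈ G.edgeSet → y ∈ f → y ∈ g →
          f ∈ w.edges → g ∉ w.edges → Equiv.swap c' c'' (C f) = C g → False := by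
        intro f g hfE hgE hyf hyg hfw hgw hswap
        have hf2 : C f = c' ∨ C f = c'' := halt.1 f hfw
        have hg2 : C g = c' ∨ C g = c'' := by
          rcases hf2 with h' | h'
          · right; rw [← hswap, h', Equiv.swap_apply_left]
          · left; rw [← hswap, h', Equiv.swap_apply_right]
        have hgf : C g ≠ C f := by
          rcases hf2 with h' | h'
          · rw [← hswap, h', Equiv.swap_apply_left]; exact h1
          · rw [← hswap, h', Equiv.swap_apply_right]; exact h1.symm
        have hysup : y ∈ w.support := by
          obtain ⟨z', hz'⟩ := Sym2.mem_iff_exists.mp hyf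
          exact w.fst_mem_support_of_mem_edges (hz' ▸ hfw)
        by_cases hyx : y = x
        · subst hyx
          have hfL := pathLastEdge w hpath f hfw hyf
          obtain ⟨z', hz'⟩ := Sym2.mem_iff_exists.mp hyg
          have hadj : G.Adj y z' := G.mem_edgeSet.mp (hz' ▸ hgE)
          apply hext
          refine ⟨z', hadj, ?_, ?_, ?_⟩
          · rw [← hz']; exact hg2
          · rw [← hz']; exact hgw
          · intro hh
            rw [← hz']
            intro hcon
            exact hgf (hcon.trans (congrArg C hfL).symm)
        · obtain ⟨f', g', hf'm, hg'm, hyf', hyg', hC'⟩ :=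
            internal_edges w halt.2 hysup hyv hyx
          have hf'2 := halt.1 f' hf'm
          have hg'2 := halt.1 g' hg'm
          have hor : C g = C f' ∨ C g = C g' := by
            rcases hg2 with h' | h'
            · rcases hf'2 with h'' | h''
              · exact Or.inl (h'.trans h''.symm)
              · rcases hg'2 with h''' | h'''
                · exact Or.inr (h'.trans h'''.symm)
                · exact absurd (h''.trans h'''.symm) hC'
            · rcases hf'2 with h'' | h''
              · rcases hg'2 with h''' | h'''
                · exact absurd (h''.trans h'''.symm) hC'
                · exact Or.inr (h'.trans h'''.symm)
              · exact Or.inl (h'.trans h''.symm)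
          rcases hor with h' | h'
          · exact hyv (hothers y ⟨g, hgE, f', w.edges_subset_edgeSet hf'm,
              fun h'' => hgw (by rw [h'']; exact hf'm), hyg, hyf', h'⟩)
          · exact hyv (hothers y ⟨g, hgE, g', w.edges_subset_edgeSet hg'm,
              fun h'' => hgw (by rw [h'']; exact hg'm), hyg, hyg', h'⟩)
      by_cases m₁ : e₁ ∈ w.edges <;> by_cases m₂ : e₂ ∈ w.edges
      · rw [hflip_in e₁ m₁, hflip_in e₂ m₂] at heq
        exact hCne ((Equiv.swap c' c'').injective heq)
      · rw [hflip_in e₁ m₁, hflip_out e₂ m₂] at heq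
        exact key e₁ e₂ he₁ he₂ hy1 hy2 m₁ m₂ heq
      · rw [hflip_out e₁ m₁, hflip_in e₂ m₂] at heq
        exact key e₂ e₁ he₂ he₁ hy2 hy1 m₂ m₁ heq.symm
      · rw [hflip_out e₁ m₁, hflip_out e₂ m₂] at heq
        exact hCne heq
  exact ⟨x, w, ⟨halt, hext, hextrev⟩, hpath, hne, hhead, hproper⟩
end
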